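/- arXiv:2201.08593 — 4 statements merged into one kernel-verified Lean document; each statement's English description precedes it below -/
import Mathlib

section
/- Let $\mathbb{H}^2$ be the hyperbolic plane and let $\alpha_1, \alpha_2, \beta$ be points of the ideal boundary $\partial\mathbb{H}^2$ with $\alpha_1 \neq \beta$ and $\alpha_2 \neq \beta$. For $i=1,2$, let $\pi_{\alpha_i,\beta}$ denote the orthogonal (nearest-point) projection onto the complete geodesic with endpoints $\alpha_i$ and $\beta$. Then $d(\pi_{\alpha_2,\beta}(y), \pi_{\alpha_1,\beta}(y)) \to 0$ as $y \in \mathbb{H}^2$ tends to $\beta$. -/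
open Filter Topology Set OnePoint

noncomputable section

/-- The hyperbolic plane, modelled by the Poincaré upper half-plane with its
hyperbolic metric (from Mathlib). -/
abbrev Hyp := UpperHalfPlane

/-- The ideal boundary `∂ℍ² = ℝ ∪ {∞}`. -/
abbrev Bdry := OnePoint ℝ

/-- Inclusion of `ℍ²` into the Riemann sphere; the closed-disk compactification
`\overline{ℍ²}` is the closure of the image, and convergence to ideal points is
phrased via this inclusion. -/
def toSphere (z : Hyp) : OnePoint ℂ := ((z : ℂ) : OnePoint ℂ)

/-- Inclusion of the ideal boundary into the Riemann sphere. -/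
def bdryToSphere : Bdry → OnePoint ℂ := OnePoint.map (fun r : ℝ => (r : ℂ))

/-- A geodesic line: an isometric embedding of `ℝ`. -/
def IsGeodesicLine (c : ℝ → Hyp) : Prop := ∀ s t : ℝ, dist (c s) (c t) = |s - t|

/-- `c` has ideal endpoints `a` (backward) and `b` (forward). -/
def JoinsBdry (c : ℝ → Hyp) (a b : Bdry) : Prop :=
  Tendsto (fun t => toSphere (c t)) atBot (𝓝 (bdryToSphere a)) ∧
  Tendsto (fun t => toSphere (c t)) atTop (𝓝 (bdryToSphere b))

/-- The complete geodesic of `ℍ²` with ideal endpoints `a` and `b`. -/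
def idealGeodesic (a b : Bdry) : Set Hyp :=
  {z | ∃ c : ℝ → Hyp, IsGeodesicLine c ∧ JoinsBdry c a b ∧ z ∈ Set.range c}

/-- `π` is the nearest-point (orthogonal) projection onto the geodesic `(a,b)`. -/
def IsNearestProj (a b : Bdry) (π : Hyp → Hyp) : Prop :=
  ∀ y, π y ∈ idealGeodesic a b ∧ ∀ z ∈ idealGeodesic a b, dist y (π y) ≤ dist y z

/-- The filter of points of `ℍ²` tending to the ideal point `b` in the
closed-disk compactification. -/
def tendsToBdry (b : Bdry) : Filter Hyp := comap toSphere (𝓝 (bdryToSphere b))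


namespace Aux

lemma bdryToSphere_coe (r : ℝ) : bdryToSphere (r : Bdry) = ((r:ℂ) : OnePoint ℂ) := rfl
lemma bdryToSphere_infty : bdryToSphere (∞ : Bdry) = (∞ : OnePoint ℂ) := rfl

lemma tendsto_sphere_coe_iff {ι : Type*} {l : Filter ι} {f : ι → Hyp} {r : ℝ} :
    Tendsto (fun i => toSphere (f i)) l (𝓝 (bdryToSphere (r:Bdry))) ↔
    Tendsto (fun i => (f i : ℂ)) l (𝓝 (r:ℂ)) := by
  rw [bdryToSphere_coe]
  exact (OnePoint.isOpenEmbedding_coe.isEmbedding.tendsto_nhds_iff).symm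

lemma tendsto_sphere_infty_iff {ι : Type*} {l : Filter ι} {f : ι → Hyp} :
    Tendsto (fun i => toSphere (f i)) l (𝓝 (bdryToSphere (∞:Bdry))) ↔
    Tendsto (fun i => ‖(f i : ℂ)‖) l atTop := by
  rw [bdryToSphere_infty, tendsto_norm_atTop_iff_cobounded, Metric.cobounded_eq_cocompact,
    ← Filter.coclosedCompact_eq_cocompact, ← OnePoint.comap_coe_nhds_infty, tendsto_comap_iff]
  rfl

lemma tendsto_tendsToBdry_iff {ι : Type*} {l : Filter ι} {f : ι → Hyp} {b : Bdry} :
    Tendsto f l (tendsToBdry b) ↔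
    Tendsto (fun i => toSphere (f i)) l (𝓝 (bdryToSphere b)) := tendsto_comap_iff

lemma norm_tendsto_infty : Tendsto (fun y : Hyp => ‖(y:ℂ)‖) (tendsToBdry ∞) atTop := by
  rw [← tendsto_sphere_infty_iff]
  exact tendsto_comap

lemma coe_tendsto_coe (r : ℝ) :
    Tendsto (fun y : Hyp => (y:ℂ)) (tendsToBdry (r:Bdry)) (𝓝 (r:ℂ)) := by
  rw [← tendsto_sphere_coe_iff (f := fun y : Hyp => y)]
  exact tendsto_comap


lemma dist_coe_sq (z w : UpperHalfPlane) :
    dist (z:ℂ) (w:ℂ)^2 = (z.re - w.re)^2 + (z.im - w.im)^2 := by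
  rw [Complex.dist_eq, Complex.sq_norm, Complex.normSq_apply]
  simp only [Complex.sub_re, Complex.sub_im, UpperHalfPlane.coe_re, UpperHalfPlane.coe_im]
  ring

lemma tangent_circles (p m q : UpperHalfPlane) (a b : ℝ) (ha : 0 < a) (hb : 0 < b)
    (hpm : dist p m = a) (hmq : dist m q = b) (hpq : dist p q = a + b) :
    (p.im * Real.sinh a + q.im * Real.sinh b) * (m.re - p.re)
      = p.im * Real.sinh a * (q.re - p.re) := by
  set px := p.re; set py := p.im; set mx := m.re; set my := m.im
  set qx := q.re; set qy := q.im
  have hpy : 0 < py := p.im_pos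
  have hmy : 0 < my := m.im_pos
  have hqy : 0 < qy := q.im_pos
  set A := Real.sinh a with hA
  set B := Real.sinh b with hB
  set Ca := Real.cosh a with hCa
  set Cb := Real.cosh b with hCb
  have ida : Ca^2 = 1 + A^2 := by rw [hCa, hA, Real.cosh_sq']
  have idb : Cb^2 = 1 + B^2 := by rw [hCb, hB, Real.cosh_sq']
  have e1 : (px-mx)^2 + (py-my)^2 = 2*py*my*(Ca - 1) := by
    have h := UpperHalfPlane.cosh_dist p m
    rw [hpm, dist_coe_sq] at h
    field_simp at h
    linarith
  have e2 : (mx-qx)^2 + (my-qy)^2 = 2*my*qy*(Cb - 1) := by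
    have h := UpperHalfPlane.cosh_dist m q
    rw [hmq, dist_coe_sq] at h
    field_simp at h
    linarith
  have e3 : (px-qx)^2 + (py-qy)^2 = 2*py*qy*(Ca*Cb + A*B - 1) := by
    have h := UpperHalfPlane.cosh_dist p q
    rw [hpq, dist_coe_sq, Real.cosh_add] at h
    field_simp at h
    linarith
  have g1 : (mx - px)^2 + (my - py*Ca)^2 = (py*A)^2 := by
    linear_combination e1 + py^2*ida
  have g2 : (mx - qx)^2 + (my - qy*Cb)^2 = (qy*B)^2 := by
    linear_combination e2 + qy^2*idb
  have g3 : (px - qx)^2 + (py*Ca - qy*Cb)^2 = (py*A + qy*B)^2 := by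
    linear_combination e3 + py^2*ida + qy^2*idb
  set r1 := py*A with hr1
  set r2 := qy*B with hr2
  have hinner : (mx-px)*(qx-px) + (my-py*Ca)*(qy*Cb-py*Ca) = r1*(r1+r2) := by
    linear_combination (g1 + g3 - g2)/2
  have hzero : ((r1+r2)*(mx-px) - r1*(qx-px))^2 + ((r1+r2)*(my-py*Ca) - r1*(qy*Cb-py*Ca))^2 = 0 := by
    linear_combination (r1+r2)^2*g1 - 2*(r1+r2)*r1*hinner + r1^2*g3
  have h1 : ((r1+r2)*(mx-px) - r1*(qx-px))^2 = 0 := by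
    have h2 := sq_nonneg ((r1+r2)*(my-py*Ca) - r1*(qy*Cb-py*Ca))
    have h3 := sq_nonneg ((r1+r2)*(mx-px) - r1*(qx-px))
    linarith
  have h2 : (r1+r2)*(mx-px) - r1*(qx-px) = 0 := pow_eq_zero_iff two_ne_zero |>.mp h1
  linarith


set_option maxHeartbeats 1000000 in
lemma re_const_of_geodesic_to_infty {c : ℝ → UpperHalfPlane} (hc : IsGeodesicLine c) (x : ℝ)
    (hbot : Tendsto (fun t => (c t : ℂ)) atBot (𝓝 (x:ℂ)))
    (htop : Tendsto (fun t => ‖(c t : ℂ)‖) atTop atTop) :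
    ∀ u, (c u).re = x := by
  have step1 : ∀ u : ℝ, ∀ s : ℝ, 0 < s → (c u).re = (c (u - s)).re := by
    intro u s hs
    set m := c u with hm
    set p := c (u - s) with hp
    set M := ‖(m:ℂ)‖ with hM
    set K0 : ℝ := 16 * (p.im * Real.sinh s) * m.im with hK0
    have hsinhs : 0 < Real.sinh s := Real.sinh_pos_iff.mpr hs
    have hpim := p.im_pos
    have hmim := m.im_pos
    have hr1pos : 0 < p.im * Real.sinh s := by positivity
    have hN : Tendsto (fun t : ℝ => ‖(c (u + t) : ℂ)‖) atTop atTop :=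
      htop.comp (tendsto_atTop_add_const_left atTop u tendsto_id)
    have hev : ∀ᶠ t : ℝ in atTop, |m.re - p.re| ≤ K0 / ‖(c (u + t) : ℂ)‖ := by
      filter_upwards [eventually_gt_atTop 0, hN.eventually_ge_atTop (2*M),
        hN.eventually_ge_atTop (|p.re|), hN.eventually_ge_atTop 1] with t ht hN2M hNpre hN1
      set q := c (u + t) with hq
      set N := ‖(q:ℂ)‖ with hNdef
      have hNpos : (0:ℝ) < N := lt_of_lt_of_le one_pos hN1
      have hMnn : 0 ≤ M := norm_nonneg _
      have hpm : dist p m = s := by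
        have h := hc (u - s) u
        rw [show u - s - u = -s by ring, abs_neg, abs_of_pos hs] at h
        exact h
      have hmq : dist m q = t := by
        have h := hc u (u + t)
        rw [show u - (u + t) = -t by ring, abs_neg, abs_of_pos ht] at h
        exact h
      have hpq : dist p q = s + t := by
        have h := hc (u - s) (u + t)
        rw [show u - s - (u + t) = -(s+t) by ring, abs_neg, abs_of_pos (by linarith)] at h
        exact h
      have key := tangent_circles p m q s t hs ht hpm hmq hpq
      set r1 := p.im * Real.sinh s with hr1
      set r2 := q.im * Real.sinh t with hr2
      have hqim := q.im_pos
      have hsinht : 0 < Real.sinh t := Real.sinh_pos_iff.mpr ht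
      have hr2pos : 0 < r2 := by positivity
      -- lower bound for r2 : N^2 ≤ 8 * m.im * r2
      have hD : N - M ≤ dist (m:ℂ) (q:ℂ) := by
        rw [dist_comm, Complex.dist_eq]
        exact (norm_sub_norm_le _ _).trans_eq rfl
      have hDhalf : N/2 ≤ dist (m:ℂ) (q:ℂ) := le_trans (by linarith) hD
      have hsinht' : Real.cosh t - 1 ≤ Real.sinh t := by
        have h1 : Real.cosh t - Real.sinh t = Real.exp (-t) := Real.cosh_sub_sinh t
        have h2 : Real.exp (-t) ≤ 1 := Real.exp_le_one_iff.mpr (by linarith)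
        linarith
      have hcosh := UpperHalfPlane.cosh_dist m q
      rw [hmq] at hcosh
      have h1 : dist (m:ℂ) (q:ℂ)^2 = 2*m.im*q.im*(Real.cosh t - 1) := by
        rw [hcosh]; field_simp; ring
      have h2 : N^2 ≤ 4 * dist (m:ℂ) (q:ℂ)^2 := by
        have := pow_le_pow_left₀ (by positivity) hDhalf 2
        calc N^2 = 4*(N/2)^2 := by ring
        _ ≤ 4 * dist (m:ℂ) (q:ℂ)^2 := by linarith
      have hr2lb : N^2 ≤ 8 * m.im * r2 := by
        have h3 : q.im*(Real.cosh t - 1) ≤ q.im * Real.sinh t :=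
          mul_le_mul_of_nonneg_left hsinht' hqim.le
        nlinarith [h1, h2, h3, hmim]
      have hqre : |q.re| ≤ N := by
        rw [hNdef, ← UpperHalfPlane.coe_re]
        exact Complex.abs_re_le_norm _
      -- main estimate
      have h5 : (r1+r2)*|m.re-p.re| = r1*|q.re-p.re| := by
        have h := congrArg abs key
        rwa [abs_mul, abs_mul, abs_of_pos (by linarith), abs_of_pos hr1pos] at h
      have habs : |m.re - p.re| * r2 ≤ r1 * (2*N) := by
        have h6 : |q.re - p.re| ≤ |q.re| + |p.re| := abs_sub _ _
        nlinarith [h5, h6, abs_nonneg (m.re - p.re), hr1pos, hqre, hNpre]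
      have h7 : |m.re - p.re| * N^2 ≤ K0 * N := by
        calc |m.re - p.re| * N^2 ≤ |m.re - p.re| * (8*m.im*r2) :=
          mul_le_mul_of_nonneg_left hr2lb (abs_nonneg _)
        _ = 8*m.im*(|m.re - p.re| * r2) := by ring
        _ ≤ 8*m.im*(r1*(2*N)) := mul_le_mul_of_nonneg_left habs (by positivity)
        _ = K0 * N := by rw [hK0]; ring
      rw [le_div_iff₀ hNpos]
      have h8 : |m.re - p.re| * N * N ≤ K0 * N := by
        calc |m.re - p.re| * N * N = |m.re - p.re| * N^2 := by ring
        _ ≤ K0 * N := h7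
      exact le_of_mul_le_mul_right h8 hNpos
    have hlim : Tendsto (fun t : ℝ => K0 / ‖(c (u + t) : ℂ)‖) atTop (𝓝 0) :=
      Tendsto.div_atTop tendsto_const_nhds hN
    have h0 : |m.re - p.re| ≤ 0 := ge_of_tendsto hlim hev
    have h9 : m.re - p.re = 0 := abs_eq_zero.mp (le_antisymm h0 (abs_nonneg _))
    linarith
  intro u
  have hconst : ∀ᶠ t : ℝ in atBot, (c t).re = (c u).re := by
    filter_upwards [eventually_lt_atBot u] with t htu
    have h := step1 u (u - t) (by linarith)
    rw [show u - (u - t) = t by ring] at h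
    exact h.symm
  have h1 : Tendsto (fun t : ℝ => (c t).re) atBot (𝓝 x) := by
    have := (Complex.continuous_re.tendsto (x:ℂ)).comp hbot
    simpa [Function.comp_def, UpperHalfPlane.coe_re] using this
  have h2 : Tendsto (fun t : ℝ => (c t).re) atBot (𝓝 ((c u).re)) :=
    Tendsto.congr' (by filter_upwards [hconst] with t ht using ht.symm) tendsto_const_nhds
  exact tendsto_nhds_unique h2 h1


def vline (x : ℝ) (t : ℝ) : Hyp := UpperHalfPlane.mk ⟨x, Real.exp t⟩ (Real.exp_pos t)

lemma vline_isGeodesicLine (x : ℝ) : IsGeodesicLine (vline x) := by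
  intro s t
  have h := (UpperHalfPlane.isometry_vertical_line x).dist_eq s t
  rw [Real.dist_eq] at h
  exact h

lemma vline_joins (x : ℝ) : JoinsBdry (vline x) (x : Bdry) ∞ := by
  constructor
  · rw [tendsto_sphere_coe_iff]
    have h1 : Tendsto (fun t : ℝ => Real.exp t) atBot (𝓝 0) := Real.tendsto_exp_atBot
    have h2 := tendsto_const_nhds (α := ℝ) (x := (x:ℂ)) (f := atBot) |>.add
      (((Complex.continuous_ofReal.tendsto 0).comp h1).mul_const Complex.I)
    simp only [Complex.ofReal_zero, zero_mul, add_zero] at h2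
    convert h2 using 2 with t
    simp [vline, Complex.mk_eq_add_mul_I, Function.comp]
  · rw [tendsto_sphere_infty_iff]
    apply tendsto_atTop_mono (f := Real.exp) _ Real.tendsto_exp_atTop
    intro t
    have h := Complex.abs_im_le_norm ((⟨x, Real.exp t⟩ : ℂ))
    simpa [vline, abs_of_pos (Real.exp_pos t)] using h

lemma idealGeodesic_coe_infty (x : ℝ) :
    idealGeodesic (x : Bdry) ∞ = {z : Hyp | z.re = x} := by
  apply Set.Subset.antisymm
  · rintro z ⟨c, hgeo, ⟨hbot, htop⟩, ⟨u, rfl⟩⟩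
    rw [tendsto_sphere_coe_iff] at hbot
    rw [tendsto_sphere_infty_iff] at htop
    exact re_const_of_geodesic_to_infty hgeo x hbot htop u
  · intro z hz
    refine ⟨vline x, vline_isGeodesicLine x, vline_joins x, Real.log z.im, ?_⟩
    have him := z.im_pos
    apply UpperHalfPlane.ext
    show (⟨x, Real.exp (Real.log z.im)⟩ : ℂ) = (z : ℂ)
    rw [Real.exp_log him]
    exact Complex.ext hz.symm rfl

lemma im_le_vdist (x : ℝ) (y : Hyp) : y.im ≤ ‖(y:ℂ) - (x:ℂ)‖ := by
  have h := Complex.abs_im_le_norm ((y:ℂ) - (x:ℂ))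
  simp only [Complex.sub_im, Complex.ofReal_im, sub_zero] at h
  rw [UpperHalfPlane.coe_im] at h
  exact le_trans (le_abs_self _) h

def vproj (x : ℝ) (y : Hyp) : Hyp :=
  UpperHalfPlane.mk ⟨x, ‖(y:ℂ) - (x:ℂ)‖⟩
    (lt_of_lt_of_le y.im_pos (im_le_vdist x y))

@[simp] lemma vproj_re (x : ℝ) (y : Hyp) : (vproj x y).re = x := rfl
@[simp] lemma vproj_im (x : ℝ) (y : Hyp) : (vproj x y).im = ‖(y:ℂ) - (x:ℂ)‖ := rfl

lemma vproj_spec (x : ℝ) (π : Hyp → Hyp) (hπ : IsNearestProj (x : Bdry) ∞ π) (y : Hyp) :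
    π y = vproj x y := by
  obtain ⟨hmem, hmin⟩ := hπ y
  rw [idealGeodesic_coe_infty] at hmem
  set R := ‖(y:ℂ) - (x:ℂ)‖ with hR
  have hRsq : R^2 = (y.re - x)^2 + y.im^2 := by
    rw [hR, Complex.sq_norm, Complex.normSq_apply]
    simp only [Complex.sub_re, Complex.sub_im, Complex.ofReal_re, Complex.ofReal_im, sub_zero]
    rw [UpperHalfPlane.coe_re, UpperHalfPlane.coe_im]
    ring
  have hyim := y.im_pos
  have hRpos : 0 < R := lt_of_lt_of_le hyim (im_le_vdist x y)
  have coshw : ∀ w : Hyp, w.re = x → Real.cosh (dist y w) = (R^2 + w.im^2)/(2*y.im*w.im) := by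
    intro w hw
    have h := UpperHalfPlane.cosh_dist y w
    rw [dist_coe_sq, hw] at h
    rw [h, hRsq]
    have hwim := w.im_pos
    field_simp
    ring
  have hz0 : vproj x y ∈ idealGeodesic (x : Bdry) ∞ := by
    rw [idealGeodesic_coe_infty]; exact rfl
  have hle := hmin _ hz0
  have hcosh : Real.cosh (dist y (π y)) ≤ Real.cosh (dist y (vproj x y)) := by
    rw [Real.cosh_le_cosh, abs_of_nonneg dist_nonneg, abs_of_nonneg dist_nonneg]
    exact hle
  rw [coshw _ hmem, coshw _ (vproj_re x y), vproj_im x y, ← hR] at hcosh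
  set h := (π y).im with hh
  have hhim := (π y).im_pos
  have key : (R^2 + h^2) * R ≤ (R^2 + R^2) * h := by
    rw [div_le_div_iff₀ (by positivity) (by positivity)] at hcosh
    nlinarith [hcosh, hyim]
  have h0 : R*(R - h)^2 = 0 := le_antisymm (by nlinarith [key]) (by positivity)
  have h1 : (R - h)^2 = 0 := by
    rcases mul_eq_zero.mp h0 with h2 | h2
    · exact absurd h2 hRpos.ne'
    · exact h2
  have hhR : h = R := by
    have h2 := pow_eq_zero_iff two_ne_zero |>.mp h1
    linarith
  apply UpperHalfPlane.ext
  show ((π y) : ℂ) = (⟨x, R⟩ : ℂ)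
  apply Complex.ext
  · show ((π y):ℂ).re = x
    rw [UpperHalfPlane.coe_re]; exact hmem
  · show ((π y):ℂ).im = R
    rw [UpperHalfPlane.coe_im]; exact hhR

lemma tendsto_sqrt_atTop : Tendsto Real.sqrt atTop atTop := by
  refine tendsto_atTop_atTop.mpr fun b => ⟨(max b 0)^2, fun x hx => ?_⟩
  calc b ≤ max b 0 := le_max_left _ _
  _ = Real.sqrt ((max b 0)^2) := (Real.sqrt_sq (le_max_right b 0)).symm
  _ ≤ Real.sqrt x := Real.sqrt_le_sqrt hx

theorem main_infty (x₁ x₂ : ℝ) (π₁ π₂ : Hyp → Hyp)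
    (hπ₁ : IsNearestProj (x₁ : Bdry) ∞ π₁) (hπ₂ : IsNearestProj (x₂ : Bdry) ∞ π₂) :
    Tendsto (fun y : Hyp => dist (π₂ y) (π₁ y)) (tendsToBdry ∞) (𝓝 0) := by
  have hf1 : ∀ y, π₁ y = vproj x₁ y := vproj_spec x₁ π₁ hπ₁
  have hf2 : ∀ y, π₂ y = vproj x₂ y := vproj_spec x₂ π₂ hπ₂
  set R₁ : Hyp → ℝ := fun y => ‖(y:ℂ) - (x₁:ℂ)‖ with hR₁
  set R₂ : Hyp → ℝ := fun y => ‖(y:ℂ) - (x₂:ℂ)‖ with hR₂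
  set B : Hyp → ℝ := fun y =>
    2 * Real.arsinh ((|x₂ - x₁| + |x₂ - x₁|) / (2 * Real.sqrt (R₂ y * R₁ y))) with hB
  have hbound : ∀ y : Hyp, dist (π₂ y) (π₁ y) ≤ B y := by
    intro y
    rw [hf1, hf2, UpperHalfPlane.dist_eq]
    have him2 : (vproj x₂ y).im = R₂ y := rfl
    have him1 : (vproj x₁ y).im = R₁ y := rfl
    rw [him2, him1]
    have h1 : 0 < R₁ y := lt_of_lt_of_le y.im_pos (im_le_vdist x₁ y)
    have h2 : 0 < R₂ y := lt_of_lt_of_le y.im_pos (im_le_vdist x₂ y)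
    have hnum : dist ((vproj x₂ y : ℂ)) ((vproj x₁ y : ℂ)) ≤ |x₂ - x₁| + |x₂ - x₁| := by
      rw [Complex.dist_eq]
      have habs := Complex.norm_le_abs_re_add_abs_im (((vproj x₂ y):ℂ) - ((vproj x₁ y):ℂ))
      have hre : (((vproj x₂ y):ℂ) - ((vproj x₁ y):ℂ)).re = x₂ - x₁ := rfl
      have him : (((vproj x₂ y):ℂ) - ((vproj x₁ y):ℂ)).im = R₂ y - R₁ y := rfl
      rw [hre, him] at habs
      have hRdiff : |R₂ y - R₁ y| ≤ |x₂ - x₁| := by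
        have h := abs_norm_sub_norm_le ((y:ℂ) - (x₂:ℂ)) ((y:ℂ) - (x₁:ℂ))
        have heq : ((y:ℂ) - (x₂:ℂ)) - ((y:ℂ) - (x₁:ℂ)) = ((x₁ - x₂ : ℝ) : ℂ) := by
          push_cast; ring
        rw [heq] at h
        simp only [Complex.norm_real, Real.norm_eq_abs] at h
        rw [abs_sub_comm x₂ x₁]
        exact h
      linarith
    have hden : (0:ℝ) < 2 * Real.sqrt (R₂ y * R₁ y) := by positivity
    have hdivle : dist ((vproj x₂ y : ℂ)) ((vproj x₁ y : ℂ)) / (2 * Real.sqrt (R₂ y * R₁ y)) ≤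
        (|x₂ - x₁| + |x₂ - x₁|) / (2 * Real.sqrt (R₂ y * R₁ y)) :=
      div_le_div_of_nonneg_right hnum hden.le |>.trans_eq rfl
    have := Real.arsinh_le_arsinh.mpr hdivle
    rw [hB]
    linarith
  have hnorm1 : Tendsto R₁ (tendsToBdry ∞) atTop := by
    apply tendsto_atTop_mono _ (tendsto_atTop_add_const_right _ (-|x₁|) norm_tendsto_infty)
    intro y
    have h := norm_sub_norm_le ((y:ℂ)) ((x₁:ℂ))
    simp only [Complex.norm_real, Real.norm_eq_abs] at h
    show ‖(y:ℂ)‖ + -|x₁| ≤ ‖(y:ℂ) - (x₁:ℂ)‖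
    linarith
  have hnorm2 : Tendsto R₂ (tendsToBdry ∞) atTop := by
    apply tendsto_atTop_mono _ (tendsto_atTop_add_const_right _ (-|x₂|) norm_tendsto_infty)
    intro y
    have h := norm_sub_norm_le ((y:ℂ)) ((x₂:ℂ))
    simp only [Complex.norm_real, Real.norm_eq_abs] at h
    show ‖(y:ℂ)‖ + -|x₂| ≤ ‖(y:ℂ) - (x₂:ℂ)‖
    linarith
  have hprod : Tendsto (fun y => R₂ y * R₁ y) (tendsToBdry ∞) atTop :=
    Tendsto.atTop_mul_atTop₀ hnorm2 hnorm1
  have hsqrt : Tendsto (fun y => Real.sqrt (R₂ y * R₁ y)) (tendsToBdry ∞) atTop :=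
    tendsto_sqrt_atTop.comp hprod
  have hden2 : Tendsto (fun y => 2 * Real.sqrt (R₂ y * R₁ y)) (tendsToBdry ∞) atTop :=
    hsqrt.const_mul_atTop two_pos
  have hfrac : Tendsto (fun y => (|x₂ - x₁| + |x₂ - x₁|) / (2 * Real.sqrt (R₂ y * R₁ y)))
      (tendsToBdry ∞) (𝓝 0) := Tendsto.div_atTop tendsto_const_nhds hden2
  have harsinh : Tendsto B (tendsToBdry ∞) (𝓝 0) := by
    have h := (Real.continuous_arsinh.tendsto 0).comp hfrac
    rw [Real.arsinh_zero] at h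
    have h2 := h.const_mul 2
    rw [mul_zero] at h2
    exact h2
  exact tendsto_of_tendsto_of_tendsto_of_le_of_le tendsto_const_nhds harsinh
    (fun y => dist_nonneg) hbound


/-! ### the inversion isometry -/

lemma coe_sub_real_ne (z : Hyp) (x : ℝ) : (z:ℂ) - (x:ℂ) ≠ 0 := by
  intro h
  have h2 := congrArg Complex.im h
  simp only [Complex.sub_im, Complex.ofReal_im, sub_zero, Complex.zero_im] at h2
  exact z.im_ne_zero h2

def inv0 (z : Hyp) : Hyp := UpperHalfPlane.mk (-((z:ℂ))⁻¹) (by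
  have h1 : (-((z:ℂ))⁻¹).im = z.im / Complex.normSq (z:ℂ) := by
    rw [Complex.neg_im, Complex.inv_im, UpperHalfPlane.coe_im]
    ring
  rw [h1]
  have := z.im_pos
  have := Complex.normSq_pos.mpr z.ne_zero
  positivity)

@[simp] lemma coe_inv0 (z : Hyp) : (inv0 z : ℂ) = -((z:ℂ))⁻¹ := rfl

lemma im_inv0 (z : Hyp) : (inv0 z).im = z.im / ‖(z:ℂ)‖^2 := by
  show (-((z:ℂ))⁻¹).im = _
  rw [Complex.neg_im, Complex.inv_im, UpperHalfPlane.coe_im, Complex.sq_norm]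
  ring

lemma dist_inv0 (z w : Hyp) : dist (inv0 z) (inv0 w) = dist z w := by
  have hZ := z.ne_zero
  have hW := w.ne_zero
  have haZ : 0 < ‖(z:ℂ)‖ := norm_pos_iff.mpr hZ
  have haW : 0 < ‖(w:ℂ)‖ := norm_pos_iff.mpr hW
  have habs : ‖(inv0 z : ℂ) - (inv0 w : ℂ)‖
      = ‖(z:ℂ) - (w:ℂ)‖ / (‖(z:ℂ)‖ * ‖(w:ℂ)‖) := by
    rw [coe_inv0, coe_inv0, show -((z:ℂ))⁻¹ - -((w:ℂ))⁻¹ = ((z:ℂ) - (w:ℂ))/((z:ℂ)*(w:ℂ)) by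
      field_simp; ring]
    rw [norm_div, norm_mul]
  have hsqrt : Real.sqrt ((inv0 z).im * (inv0 w).im)
      = Real.sqrt (z.im * w.im) / (‖(z:ℂ)‖ * ‖(w:ℂ)‖) := by
    rw [im_inv0, im_inv0,
      show z.im / ‖(z:ℂ)‖^2 * (w.im / ‖(w:ℂ)‖^2)
        = (z.im * w.im) / (‖(z:ℂ)‖ * ‖(w:ℂ)‖)^2 by ring,
      Real.sqrt_div (by positivity), Real.sqrt_sq (by positivity)]
  rw [UpperHalfPlane.dist_eq, UpperHalfPlane.dist_eq, Complex.dist_eq, Complex.dist_eq,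
    habs, hsqrt]
  congr 2
  field_simp

/-! ### the Möbius map sending x to ∞ -/

def Fmap (x : ℝ) (z : Hyp) : Hyp := inv0 ((-x) +ᵥ z)
def Gmap (x : ℝ) (w : Hyp) : Hyp := x +ᵥ inv0 w

lemma coe_Fmap (x : ℝ) (z : Hyp) : (Fmap x z : ℂ) = -((z:ℂ) - (x:ℂ))⁻¹ := by
  rw [Fmap, coe_inv0, UpperHalfPlane.coe_vadd]
  push_cast
  ring_nf

lemma coe_Gmap (x : ℝ) (w : Hyp) : (Gmap x w : ℂ) = (x:ℂ) - ((w:ℂ))⁻¹ := by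
  rw [Gmap, UpperHalfPlane.coe_vadd, coe_inv0]
  ring

lemma Gmap_Fmap (x : ℝ) (z : Hyp) : Gmap x (Fmap x z) = z := by
  apply UpperHalfPlane.ext
  show (Gmap x (Fmap x z) : ℂ) = (z : ℂ)
  rw [coe_Gmap, coe_Fmap]
  have h := coe_sub_real_ne z x
  field_simp
  ring

lemma Fmap_Gmap (x : ℝ) (w : Hyp) : Fmap x (Gmap x w) = w := by
  apply UpperHalfPlane.ext
  show (Fmap x (Gmap x w) : ℂ) = (w : ℂ)
  rw [coe_Fmap, coe_Gmap]
  have h := w.ne_zero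
  rw [show (x:ℂ) - ((w:ℂ))⁻¹ - x = -((w:ℂ))⁻¹ by ring, inv_neg, inv_inv, neg_neg]

lemma dist_Fmap (x : ℝ) (z w : Hyp) : dist (Fmap x z) (Fmap x w) = dist z w := by
  rw [Fmap, Fmap, dist_inv0]
  exact (UpperHalfPlane.isometry_real_vadd (-x)).dist_eq z w

lemma dist_Gmap (x : ℝ) (z w : Hyp) : dist (Gmap x z) (Gmap x w) = dist z w := by
  rw [Gmap, Gmap]
  rw [(UpperHalfPlane.isometry_real_vadd x).dist_eq]
  exact dist_inv0 z w

/-! ### the boundary map -/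

def Fbdry (x : ℝ) : Bdry → Bdry := fun b =>
  match b with
  | OnePoint.infty => ((0:ℝ) : Bdry)
  | (r : ℝ) => if r = x then ∞ else ((-(r - x)⁻¹ : ℝ) : Bdry)

@[simp] lemma Fbdry_infty (x : ℝ) : Fbdry x ∞ = ((0:ℝ) : Bdry) := rfl
lemma Fbdry_self (x : ℝ) : Fbdry x (x : Bdry) = ∞ := by simp [Fbdry]
lemma Fbdry_coe (x r : ℝ) (h : r ≠ x) : Fbdry x (r : Bdry) = ((-(r - x)⁻¹ : ℝ) : Bdry) := by
  simp [Fbdry, h]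

/-! ### boundary compatibility -/

lemma cob_of_infty (x : ℝ) :
    Tendsto (fun y : Hyp => (y:ℂ) - (x:ℂ)) (tendsToBdry ∞) (Bornology.cobounded ℂ) := by
  rw [← tendsto_norm_atTop_iff_cobounded]
  apply tendsto_atTop_mono _ (tendsto_atTop_add_const_right _ (-‖(x:ℂ)‖) norm_tendsto_infty)
  intro y
  have := norm_sub_norm_le ((y:ℂ)) ((x:ℂ))
  linarith

lemma Fcompat_infty (x : ℝ) :
    Tendsto (fun y : Hyp => toSphere (Fmap x y)) (tendsToBdry ∞)
      (𝓝 (bdryToSphere (Fbdry x ∞))) := by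
  rw [Fbdry_infty, tendsto_sphere_coe_iff]
  have h1 := (tendsto_inv₀_cobounded).comp (cob_of_infty x)
  have h2 : Tendsto (fun y : Hyp => -((y:ℂ) - (x:ℂ))⁻¹) (tendsToBdry ∞) (𝓝 (-0)) := h1.neg
  rw [neg_zero] at h2
  have heq : (fun y : Hyp => ((Fmap x y : Hyp) : ℂ)) = fun y : Hyp => -((y:ℂ) - (x:ℂ))⁻¹ :=
    funext fun y => coe_Fmap x y
  rw [show ((0:ℝ):ℂ) = 0 by simp, heq]
  exact h2

lemma Fcompat_self (x : ℝ) :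
    Tendsto (fun y : Hyp => toSphere (Fmap x y)) (tendsToBdry (x:Bdry))
      (𝓝 (bdryToSphere ∞)) := by
  rw [tendsto_sphere_infty_iff]
  have h0 : Tendsto (fun y : Hyp => ‖(y:ℂ) - (x:ℂ)‖) (tendsToBdry (x:Bdry)) (𝓝[>] 0) := by
    rw [tendsto_nhdsWithin_iff]
    constructor
    · have h := ((coe_tendsto_coe x).sub_const ((x:ℂ))).norm
      simpa using h
    · exact Eventually.of_forall fun y => norm_pos_iff.mpr (coe_sub_real_ne y x)
  have h1 := h0.inv_tendsto_nhdsGT_zero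
  have heq : (fun y : Hyp => ‖((Fmap x y : Hyp) : ℂ)‖)
      = fun y : Hyp => ‖(y:ℂ) - (x:ℂ)‖⁻¹ := by
    funext y
    rw [coe_Fmap, norm_neg, norm_inv]
  rw [heq]
  exact h1

lemma Fcompat_coe (x r : ℝ) (h : r ≠ x) :
    Tendsto (fun y : Hyp => toSphere (Fmap x y)) (tendsToBdry (r:Bdry))
      (𝓝 (bdryToSphere ((-(r - x)⁻¹ : ℝ) : Bdry))) := by
  rw [tendsto_sphere_coe_iff]
  have hne : (r:ℂ) - (x:ℂ) ≠ 0 := by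
    rw [sub_ne_zero]
    exact_mod_cast h
  have h1 := (((coe_tendsto_coe r).sub_const ((x:ℂ))).inv₀ hne).neg
  have heq : (fun y : Hyp => ((Fmap x y : Hyp) : ℂ)) = fun y : Hyp => -((y:ℂ) - (x:ℂ))⁻¹ :=
    funext fun y => coe_Fmap x y
  rw [heq, show ((-(r - x)⁻¹ : ℝ) : ℂ) = -(((r:ℂ)) - ((x:ℂ)))⁻¹ by push_cast; ring]
  exact h1

lemma Gcompat_infty (x : ℝ) :
    Tendsto (fun w : Hyp => toSphere (Gmap x w)) (tendsToBdry ∞)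
      (𝓝 (bdryToSphere (x:Bdry))) := by
  rw [tendsto_sphere_coe_iff]
  have cob : Tendsto (fun w : Hyp => (w:ℂ)) (tendsToBdry ∞) (Bornology.cobounded ℂ) :=
    tendsto_norm_atTop_iff_cobounded.mp norm_tendsto_infty
  have h1 : Tendsto (fun w : Hyp => ((w:ℂ))⁻¹) (tendsToBdry ∞) (𝓝 0) :=
    tendsto_inv₀_cobounded.comp cob
  have h2 := (tendsto_const_nhds (α := Hyp) (x := ((x:ℂ))) (f := tendsToBdry ∞)).sub h1
  rw [sub_zero] at h2
  have heq : (fun w : Hyp => ((Gmap x w : Hyp) : ℂ)) = fun w : Hyp => (x:ℂ) - ((w:ℂ))⁻¹ :=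
    funext fun w => coe_Gmap x w
  rw [heq]
  exact h2

lemma Gcompat_zero (x : ℝ) :
    Tendsto (fun w : Hyp => toSphere (Gmap x w)) (tendsToBdry ((0:ℝ):Bdry))
      (𝓝 (bdryToSphere ∞)) := by
  rw [tendsto_sphere_infty_iff]
  have h0 : Tendsto (fun w : Hyp => ‖(w:ℂ)‖) (tendsToBdry ((0:ℝ):Bdry)) (𝓝[>] 0) := by
    rw [tendsto_nhdsWithin_iff]
    constructor
    · have h := (coe_tendsto_coe 0).norm
      simpa using h
    · exact Eventually.of_forall fun w => norm_pos_iff.mpr w.ne_zero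
  have h1 := h0.inv_tendsto_nhdsGT_zero
  apply tendsto_atTop_mono _ (tendsto_atTop_add_const_right _ (-‖(x:ℂ)‖) h1)
  intro w
  have h2 : ‖((w:ℂ))⁻¹‖ - ‖(x:ℂ)‖ ≤ ‖(x:ℂ) - ((w:ℂ))⁻¹‖ := by
    have h3 := norm_sub_norm_le (((w:ℂ))⁻¹) ((x:ℂ))
    calc ‖((w:ℂ))⁻¹‖ - ‖(x:ℂ)‖ ≤ ‖((w:ℂ))⁻¹ - (x:ℂ)‖ := h3
    _ = ‖(x:ℂ) - ((w:ℂ))⁻¹‖ := norm_sub_rev _ _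
  rw [coe_Gmap]
  show (fun w : Hyp => ‖(w:ℂ)‖)⁻¹ w + -‖(x:ℂ)‖ ≤ ‖(x:ℂ) - ((w:ℂ))⁻¹‖
  rw [Pi.inv_apply, ← norm_inv]
  linarith

lemma Gcompat_coe (x r : ℝ) (h : r ≠ x) :
    Tendsto (fun w : Hyp => toSphere (Gmap x w)) (tendsToBdry ((-(r - x)⁻¹ : ℝ):Bdry))
      (𝓝 (bdryToSphere (r:Bdry))) := by
  rw [tendsto_sphere_coe_iff]
  have hrx : r - x ≠ 0 := sub_ne_zero.mpr h
  have hs : ((-(r - x)⁻¹ : ℝ) : ℂ) ≠ 0 :=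
    Complex.ofReal_ne_zero.mpr (neg_ne_zero.mpr (inv_ne_zero hrx))
  have h1 := ((coe_tendsto_coe (-(r - x)⁻¹)).inv₀ hs)
  have h2 := (tendsto_const_nhds (α := Hyp) (x := ((x:ℂ)))
    (f := tendsToBdry ((-(r - x)⁻¹ : ℝ):Bdry))).sub h1
  have heq : (fun w : Hyp => ((Gmap x w : Hyp) : ℂ)) = fun w : Hyp => (x:ℂ) - ((w:ℂ))⁻¹ :=
    funext fun w => coe_Gmap x w
  rw [heq]
  have hval : (x:ℂ) - (((-(r - x)⁻¹ : ℝ) : ℂ))⁻¹ = (r:ℂ) := by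
    push_cast
    rw [inv_neg, inv_inv]
    ring
  rw [hval] at h2
  exact h2

/-! ### transport -/

lemma ideal_map {F : Hyp → Hyp} {a b a' b' : Bdry}
    (hFiso : ∀ z w, dist (F z) (F w) = dist z w)
    (hFa : Tendsto (fun y => toSphere (F y)) (tendsToBdry a) (𝓝 (bdryToSphere a')))
    (hFb : Tendsto (fun y => toSphere (F y)) (tendsToBdry b) (𝓝 (bdryToSphere b'))) :
    ∀ z ∈ idealGeodesic a b, F z ∈ idealGeodesic a' b' := by
  rintro z ⟨c, hgeo, ⟨hbot, htop⟩, u, rfl⟩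
  refine ⟨fun t => F (c t), fun s t => by rw [hFiso]; exact hgeo s t, ⟨?_, ?_⟩, u, rfl⟩
  · have hc : Tendsto c atBot (tendsToBdry a) := by
      rw [tendsToBdry, tendsto_comap_iff]; exact hbot
    exact hFa.comp hc
  · have hc : Tendsto c atTop (tendsToBdry b) := by
      rw [tendsToBdry, tendsto_comap_iff]; exact htop
    exact hFb.comp hc

lemma proj_map {F G : Hyp → Hyp} {a b a' b' : Bdry}
    (hFG : ∀ w, F (G w) = w)
    (hFiso : ∀ z w, dist (F z) (F w) = dist z w)
    (hGiso : ∀ z w, dist (G z) (G w) = dist z w)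
    (hFa : Tendsto (fun y => toSphere (F y)) (tendsToBdry a) (𝓝 (bdryToSphere a')))
    (hFb : Tendsto (fun y => toSphere (F y)) (tendsToBdry b) (𝓝 (bdryToSphere b')))
    (hGa : Tendsto (fun y => toSphere (G y)) (tendsToBdry a') (𝓝 (bdryToSphere a)))
    (hGb : Tendsto (fun y => toSphere (G y)) (tendsToBdry b') (𝓝 (bdryToSphere b)))
    (π : Hyp → Hyp) (hπ : IsNearestProj a b π) :
    IsNearestProj a' b' (fun y => F (π (G y))) := by
  intro y
  refine ⟨ideal_map hFiso hFa hFb _ (hπ (G y)).1, ?_⟩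
  intro z hz
  have hz' : G z ∈ idealGeodesic a b := ideal_map hGiso hGa hGb _ hz
  have h1 := (hπ (G y)).2 (G z) hz'
  calc dist y (F (π (G y))) = dist (F (G y)) (F (π (G y))) := by rw [hFG]
  _ = dist (G y) (π (G y)) := hFiso _ _
  _ ≤ dist (G y) (G z) := h1
  _ = dist (F (G y)) (F (G z)) := (hFiso _ _).symm
  _ = dist y z := by rw [hFG, hFG]


end Aux

open Aux in
/-- If $α_1 ≠ β$ and $α_2 ≠ β$ are ideal points and $π_{α_i,β}$ are the
orthogonal projections onto the geodesics $(α_i,β)$, then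
$d(π_{α_2,β}(y), π_{α_1,β}(y)) → 0$ as $y → β$ in $\overline{ℍ^2}$. -/
theorem projections_close_near_common_endpoint
    (α₁ α₂ β : Bdry) (h₁ : α₁ ≠ β) (h₂ : α₂ ≠ β)
    (π₁ π₂ : Hyp → Hyp)
    (hπ₁ : IsNearestProj α₁ β π₁) (hπ₂ : IsNearestProj α₂ β π₂) :
    Tendsto (fun y : Hyp => dist (π₂ y) (π₁ y)) (tendsToBdry β) (𝓝 0) := by
  cases β with
  | none =>
    cases α₁ with
    | none => exact absurd rfl h₁
    | some x₁ =>
      cases α₂ with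
      | none => exact absurd rfl h₂
      | some x₂ => exact main_infty x₁ x₂ π₁ π₂ hπ₁ hπ₂
  | some x =>
    -- conjugate by the Möbius transformation sending x to ∞
    have hFself := Fcompat_self x
    have hGinfty := Gcompat_infty x
    -- handle each α
    have key : ∀ (α : Bdry), α ≠ (x:Bdry) → ∀ π, IsNearestProj α (x:Bdry) π →
        ∃ x' : ℝ, IsNearestProj (x' : Bdry) ∞ (fun y => Fmap x (π (Gmap x y))) ∧
          (∀ y, dist y (π y) = dist y (π y)) := by
      intro α hα π hπ
      cases α with
      | none =>
        refine ⟨0, ?_, fun y => rfl⟩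
        exact proj_map (Fmap_Gmap x) (dist_Fmap x) (dist_Gmap x)
          (Fcompat_infty x) hFself (Gcompat_zero x) hGinfty π hπ
      | some r =>
        have hrx : r ≠ x := fun h => hα (by rw [h]; rfl)
        refine ⟨-(r - x)⁻¹, ?_, fun y => rfl⟩
        exact proj_map (Fmap_Gmap x) (dist_Fmap x) (dist_Gmap x)
          (Fcompat_coe x r hrx) hFself (Gcompat_coe x r hrx) hGinfty π hπ
    obtain ⟨x₁', hπ₁', -⟩ := key α₁ h₁ π₁ hπ₁
    obtain ⟨x₂', hπ₂', -⟩ := key α₂ h₂ π₂ hπ₂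
    have htends := main_infty x₁' x₂' _ _ hπ₁' hπ₂'
    have hFfilter : Tendsto (Fmap x) (tendsToBdry (x:Bdry)) (tendsToBdry ∞) := by
      unfold tendsToBdry
      rw [tendsto_comap_iff]
      exact hFself
    have hcomp := htends.comp hFfilter
    have heq : (fun y : Hyp => dist (Fmap x (π₂ (Gmap x (Fmap x y))))
        (Fmap x (π₁ (Gmap x (Fmap x y))))) = fun y : Hyp => dist (π₂ y) (π₁ y) := by
      funext y
      rw [Gmap_Fmap, dist_Fmap]
    rw [← heq]
    exact hcomp
end
end

section
/- Let $\alpha_1, \alpha_2, \beta_1, \beta_2$ be pairwise distinct points of $\partial\mathbb{H}^2$, and fix $p_0 \in \mathbb{H}^2$. Then $\lim_{y\to\beta_1} \dfrac{d(\pi_{\alpha_1,\beta_1}(y), \pi_{\alpha_1,\beta_1}(p_0))}{d(\pi_{\alpha_2,\beta_1}(y), \pi_{\alpha_2,\beta_1}(p_0))} = 1$, where $y \in \mathbb{H}^2$ tends to $\beta_1$ in $\overline{\mathbb{H}^2}$. -/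
open Filter Topology Set OnePoint

noncomputable section

namespace ProjAux

open UpperHalfPlane Complex Real Filter

lemma im_coe_pos (y : Hyp) : 0 < ((y : ℂ)).im := y.im_pos

lemma sub_real_ne_zero (y : Hyp) (a : ℝ) : (y : ℂ) - (a : ℂ) ≠ 0 := by
  intro h
  have h2 := congrArg Complex.im h
  simp only [Complex.sub_im, Complex.ofReal_im, Complex.zero_im, sub_zero,
    UpperHalfPlane.coe_im] at h2
  exact (ne_of_gt y.im_pos) h2

lemma dist_eq_dist_of_cosh {z w z' w' : Hyp}
    (h : Real.cosh (dist z w) = Real.cosh (dist z' w')) : dist z w = dist z' w' := by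
  have h1 := Real.cosh_le_cosh.mp h.le
  have h2 := Real.cosh_le_cosh.mp h.ge
  rw [_root_.abs_of_nonneg dist_nonneg, _root_.abs_of_nonneg dist_nonneg] at h1 h2
  exact le_antisymm h1 h2

/-- `Tendsto` to a finite boundary point, read off in `ℂ`. -/
lemma tendsto_toSphere_coe_iff {X : Type*} {l : Filter X} {f : X → Hyp} {r : ℝ} :
    Tendsto (fun x => toSphere (f x)) l (𝓝 (bdryToSphere (↑r))) ↔
      Tendsto (fun x => ((f x : ℂ))) l (𝓝 ((r : ℝ) : ℂ)) := by
  have hb : bdryToSphere (↑r) = (((r : ℝ) : ℂ) : OnePoint ℂ) := rfl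
  rw [hb, ← OnePoint.comap_coe_nhds ((r : ℝ) : ℂ), tendsto_comap_iff]
  rfl

/-- `Tendsto` to the boundary point `∞`, read off in `ℂ`. -/
lemma tendsto_toSphere_infty_iff {X : Type*} {l : Filter X} {f : X → Hyp} :
    Tendsto (fun x => toSphere (f x)) l (𝓝 (bdryToSphere ∞)) ↔
      Tendsto (fun x => ‖(f x : ℂ)‖) l atTop := by
  have hb : bdryToSphere ∞ = (∞ : OnePoint ℂ) := rfl
  have h2 : Tendsto (fun x => ‖(f x : ℂ)‖) l atTop ↔
      Tendsto (fun x => ((f x : ℂ))) l (Filter.comap ((↑) : ℂ → OnePoint ℂ) (𝓝 ∞)) := by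
    rw [OnePoint.comap_coe_nhds_infty, Filter.coclosedCompact_eq_cocompact,
      ← Metric.cobounded_eq_cocompact, tendsto_norm_atTop_iff_cobounded]
  rw [hb, h2, tendsto_comap_iff]
  rfl


/-! ### Möbius maps -/

lemma neg_inv_im (w : ℂ) : (-(w⁻¹)).im = w.im / Complex.normSq w := by
  rw [Complex.neg_im, Complex.inv_im, neg_div, neg_neg]

/-- The hyperbolic isometry `z ↦ -(z - b)⁻¹`. -/
def minv (b : ℝ) (z : Hyp) : Hyp :=
  UpperHalfPlane.mk (-((((z : ℂ) - (b : ℂ)))⁻¹)) (by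
    rw [neg_inv_im]
    apply div_pos
    · simpa using z.im_pos
    · exact Complex.normSq_pos.mpr (sub_real_ne_zero z b))

/-- The inverse map `z ↦ b - z⁻¹`. -/
def minvInv (b : ℝ) (z : Hyp) : Hyp :=
  UpperHalfPlane.mk ((b : ℂ) - ((z : ℂ))⁻¹) (by
    have h0 : ((z : ℂ)) ≠ 0 := by
      intro h
      have h2 := congrArg Complex.im h
      simp only [UpperHalfPlane.coe_im, Complex.zero_im] at h2
      exact (ne_of_gt z.im_pos) h2
    have : ((b : ℂ) - ((z : ℂ))⁻¹).im = (-(((z : ℂ))⁻¹)).im := by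
      simp [Complex.sub_im]
    rw [this, neg_inv_im]
    apply div_pos
    · simpa using z.im_pos
    · exact Complex.normSq_pos.mpr h0)

@[simp] lemma coe_minv (b : ℝ) (z : Hyp) :
    ((minv b z : Hyp) : ℂ) = -((((z : ℂ) - (b : ℂ)))⁻¹) := rfl

@[simp] lemma coe_minvInv (b : ℝ) (z : Hyp) :
    ((minvInv b z : Hyp) : ℂ) = (b : ℂ) - ((z : ℂ))⁻¹ := rfl

lemma coe_ne_zero (z : Hyp) : ((z : ℂ)) ≠ 0 := by
  intro h
  have h2 := congrArg Complex.im h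
  simp only [UpperHalfPlane.coe_im, Complex.zero_im] at h2
  exact (ne_of_gt z.im_pos) h2

lemma minvInv_minv (b : ℝ) (z : Hyp) : minvInv b (minv b z) = z := by
  apply UpperHalfPlane.ext
  rw [coe_minvInv, coe_minv]
  have h : ((z : ℂ) - (b : ℂ)) ≠ 0 := sub_real_ne_zero z b
  field_simp
  ring

lemma minv_minvInv (b : ℝ) (z : Hyp) : minv b (minvInv b z) = z := by
  apply UpperHalfPlane.ext
  rw [coe_minv, coe_minvInv]
  have h : ((z : ℂ)) ≠ 0 := coe_ne_zero z
  field_simp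
  ring

lemma im_minv (b : ℝ) (z : Hyp) :
    (minv b z).im = z.im / Complex.normSq ((z : ℂ) - (b : ℂ)) := by
  have : (minv b z).im = ((minv b z : Hyp) : ℂ).im := rfl
  rw [this, coe_minv, neg_inv_im]
  congr 1
  simp [Complex.sub_im]

lemma dist_minv (b : ℝ) (z w : Hyp) : dist (minv b z) (minv b w) = dist z w := by
  apply dist_eq_dist_of_cosh
  rw [UpperHalfPlane.cosh_dist, UpperHalfPlane.cosh_dist]
  congr 1
  rw [Complex.dist_eq, Complex.dist_eq, Complex.sq_norm, Complex.sq_norm]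
  have hz : ((z : ℂ) - (b : ℂ)) ≠ 0 := sub_real_ne_zero z b
  have hw : ((w : ℂ) - (b : ℂ)) ≠ 0 := sub_real_ne_zero w b
  have hsub : ((minv b z : Hyp) : ℂ) - ((minv b w : Hyp) : ℂ) =
      ((z : ℂ) - (w : ℂ)) / (((z : ℂ) - (b : ℂ)) * ((w : ℂ) - (b : ℂ))) := by
    rw [coe_minv, coe_minv]
    field_simp
    ring
  rw [hsub, map_div₀ Complex.normSq, map_mul Complex.normSq, im_minv, im_minv]
  have h1 : Complex.normSq ((z : ℂ) - (b : ℂ)) ≠ 0 := (Complex.normSq_pos.mpr hz).ne'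
  have h2 : Complex.normSq ((w : ℂ) - (b : ℂ)) ≠ 0 := (Complex.normSq_pos.mpr hw).ne'
  have hzim : z.im ≠ 0 := ne_of_gt z.im_pos
  have hwim : w.im ≠ 0 := ne_of_gt w.im_pos
  field_simp

lemma dist_minvInv (b : ℝ) (z w : Hyp) : dist (minvInv b z) (minvInv b w) = dist z w := by
  have := dist_minv b (minvInv b z) (minvInv b w)
  rw [minv_minvInv, minv_minvInv] at this
  exact this.symm


/-! ### The vertical geodesic -/

/-- The standard vertical geodesic over `a`. -/
def cVert (a : ℝ) : ℝ → Hyp := fun t => UpperHalfPlane.mk ⟨a, Real.exp t⟩ (Real.exp_pos t)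

lemma isGeodesicLine_cVert (a : ℝ) : IsGeodesicLine (cVert a) := by
  intro s t
  have h := (UpperHalfPlane.isometry_vertical_line a).dist_eq s t
  rw [Real.dist_eq] at h
  exact h

lemma coe_cVert (a t : ℝ) : ((cVert a t : Hyp) : ℂ) = (a : ℂ) + (Real.exp t : ℝ) * Complex.I := by
  rw [show ((cVert a t : Hyp) : ℂ) = Complex.mk a (Real.exp t) from rfl]
  rw [Complex.mk_eq_add_mul_I]

lemma joinsBdry_cVert (a : ℝ) : JoinsBdry (cVert a) ↑a ∞ := by
  constructor
  · rw [tendsto_toSphere_coe_iff]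
    have h1 : Tendsto (fun t : ℝ => ((Real.exp t : ℝ) : ℂ) * Complex.I) atBot
        (𝓝 (((0 : ℝ) : ℂ) * Complex.I)) :=
      ((Complex.continuous_ofReal.tendsto 0).comp Real.tendsto_exp_atBot).mul_const _
    have h2 := (tendsto_const_nhds (α := ℝ) (f := atBot) (x := ((a : ℝ) : ℂ))).add h1
    simp only [Complex.ofReal_zero, zero_mul, add_zero] at h2
    refine Tendsto.congr (fun t => ?_) h2
    exact (coe_cVert a t).symm
  · rw [tendsto_toSphere_infty_iff]
    apply tendsto_atTop_mono _ Real.tendsto_exp_atTop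
    intro t
    calc Real.exp t = |((cVert a t : Hyp) : ℂ).im| := by
          simp [cVert, abs_of_pos (Real.exp_pos t)]
      _ ≤ ‖((cVert a t : Hyp) : ℂ)‖ := Complex.abs_im_le_norm _
      _ = ‖((cVert a t : Hyp) : ℂ)‖ := rfl

lemma mem_idealGeodesic_of_re_eq {a : ℝ} {z : Hyp} (hz : z.re = a) :
    z ∈ idealGeodesic ↑a ∞ := by
  refine ⟨cVert a, isGeodesicLine_cVert a, joinsBdry_cVert a, ⟨Real.log z.im, ?_⟩⟩
  apply UpperHalfPlane.ext'
  · simpa [cVert] using hz.symm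
  · simp [cVert, Real.exp_log z.im_pos]


/-! ### The horocycle lemma -/

lemma norm_sub_real_sq (z : Hyp) (a : ℝ) :
    ‖(z : ℂ) - (a : ℂ)‖ ^ 2 = (z.re - a) ^ 2 + z.im ^ 2 := by
  rw [show ‖(z : ℂ) - (a : ℂ)‖ ^ 2 = Complex.normSq ((z : ℂ) - (a : ℂ)) by
    exact Complex.sq_norm _]
  simp [Complex.normSq_apply, Complex.sub_re, Complex.sub_im]
  ring

/-- The horocycle lemma: a geodesic line converging (backwards) to a real
boundary point `a` travels along the horocycles based at `a`. -/
lemma horocycle {c : ℝ → Hyp} (hc : IsGeodesicLine c) {a : ℝ}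
    (ha : Tendsto (fun t => ((c t : Hyp) : ℂ)) atBot (𝓝 ((a : ℝ) : ℂ))) :
    ∃ lam : ℝ, 0 < lam ∧ ∀ t, ‖((c t : Hyp) : ℂ) - (a : ℂ)‖ ^ 2
      = lam * (Real.exp t * (c t).im) := by
  have hvpos : ∀ s : ℝ, 0 < (c s).im := fun s => (c s).im_pos
  have hureal : Tendsto (fun s => (c s).re) atBot (𝓝 a) := by
    have := (Complex.continuous_re.tendsto _).comp ha
    exact this
  have hvreal : Tendsto (fun s => (c s).im) atBot (𝓝 0) := by
    have := (Complex.continuous_im.tendsto _).comp ha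
    exact this
  have key : ∀ t : ℝ, Tendsto (fun s => (c s).im * Real.exp (-s)) atBot
      (𝓝 (((a - (c t).re) ^ 2 + (c t).im ^ 2) / ((c t).im * Real.exp t))) := by
    intro t
    have heq : ∀ᶠ s in atBot, (c s).im * Real.exp (-s) =
        (((c s).re - (c t).re) ^ 2 + (c s).im ^ 2 + (c t).im ^ 2
          - (c s).im * (c t).im * Real.exp (s - t)) / ((c t).im * Real.exp t) := by
      filter_upwards [eventually_le_atBot t] with s hs
      have hdist : dist (c s) (c t) = t - s := by
        rw [hc s t, abs_of_nonpos (by linarith), neg_sub]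
      have hcosh := UpperHalfPlane.cosh_dist' (c s) (c t)
      rw [hdist, Real.cosh_eq] at hcosh
      have hvs := hvpos s; have hvt := hvpos t
      have h2 : (c s).im * (c t).im * (Real.exp (t - s) + Real.exp (s - t))
          = ((c s).re - (c t).re) ^ 2 + (c s).im ^ 2 + (c t).im ^ 2 := by
        field_simp at hcosh
        rw [neg_sub] at hcosh
        linear_combination hcosh
      have he1 : Real.exp (t - s) = Real.exp t * Real.exp (-s) := by
        rw [← Real.exp_add]; ring_nf
      rw [he1] at h2
      rw [eq_div_iff (by positivity)]
      nlinarith [h2]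
    rw [tendsto_congr' heq]
    have hexp : Tendsto (fun s : ℝ => Real.exp (s - t)) atBot (𝓝 0) := by
      apply Real.tendsto_exp_atBot.comp
      simpa [sub_eq_add_neg] using tendsto_atBot_add_const_right atBot (-t) tendsto_id
    have h1 : Tendsto (fun s => ((c s).re - (c t).re) ^ 2 + (c s).im ^ 2 + (c t).im ^ 2
        - (c s).im * (c t).im * Real.exp (s - t)) atBot
        (𝓝 ((a - (c t).re) ^ 2 + 0 ^ 2 + (c t).im ^ 2 - 0 * (c t).im * 0)) :=
      ((((hureal.sub_const ((c t).re)).pow 2).add (hvreal.pow 2)).add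
        tendsto_const_nhds).sub ((hvreal.mul tendsto_const_nhds).mul hexp)
    have h1' := h1.div_const ((c t).im * Real.exp t)
    have : (a - (c t).re) ^ 2 + 0 ^ 2 + (c t).im ^ 2 - 0 * (c t).im * 0
        = (a - (c t).re) ^ 2 + (c t).im ^ 2 := by ring
    rwa [this] at h1'
  refine ⟨((a - (c 0).re) ^ 2 + (c 0).im ^ 2) / ((c 0).im), ?_, ?_⟩
  · have h0 := hvpos 0
    positivity
  · intro t
    have hQt := tendsto_nhds_unique (key t) (key 0)
    simp only [Real.exp_zero, mul_one] at hQt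
    have hvt := hvpos t; have hv0 := hvpos 0
    have hne1 : (c t).im * Real.exp t ≠ 0 := by positivity
    rw [div_eq_div_iff hne1 hv0.ne'] at hQt
    rw [norm_sub_real_sq]
    have hsw : ((c t).re - a) ^ 2 = (a - (c t).re) ^ 2 := by ring
    rw [hsw, div_mul_eq_mul_div, eq_div_iff hv0.ne']
    linarith [hQt]


/-! ### Classification of geodesics joining a real point to `∞` -/

lemma re_const_of_joins {c : ℝ → Hyp} (hc : IsGeodesicLine c) {a : ℝ}
    (h : JoinsBdry c ↑a ∞) : ∀ t, (c t).re = a := by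
  obtain ⟨hback, hfwd⟩ := h
  have ha : Tendsto (fun t => ((c t : Hyp) : ℂ)) atBot (𝓝 ((a : ℝ) : ℂ)) :=
    tendsto_toSphere_coe_iff.mp hback
  have hn : Tendsto (fun t => ‖((c t : Hyp) : ℂ)‖) atTop atTop :=
    tendsto_toSphere_infty_iff.mp hfwd
  -- the reversed, inverted geodesic
  set d : ℝ → Hyp := fun t => minv a (c (-t)) with hd
  have hdgeo : IsGeodesicLine d := by
    intro s t
    rw [hd]
    simp only
    rw [dist_minv, hc (-s) (-t)]
    rw [show (-s - -t) = -(s - t) by ring, abs_neg]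
  have hd0 : Tendsto (fun t => ((d t : Hyp) : ℂ)) atBot (𝓝 (((0 : ℝ) : ℝ) : ℂ)) := by
    have hneg : Tendsto (fun t : ℝ => -t) atBot atTop := tendsto_neg_atBot_atTop
    have hnorm : Tendsto (fun t : ℝ => ‖((c (-t) : Hyp) : ℂ)‖) atBot atTop := hn.comp hneg
    have hnorm2 : Tendsto (fun t : ℝ => ‖((c (-t) : Hyp) : ℂ) - (a : ℂ)‖) atBot atTop := by
      apply tendsto_atTop_mono (fun t => ?_)
        (tendsto_atTop_add_const_right atBot (-‖(a : ℂ)‖) hnorm)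
      calc ‖((c (-t) : Hyp) : ℂ)‖ + -‖(a : ℂ)‖
          = ‖((c (-t) : Hyp) : ℂ)‖ - ‖(a : ℂ)‖ := by ring
        _ ≤ ‖((c (-t) : Hyp) : ℂ) - (a : ℂ)‖ := norm_sub_norm_le _ _
    have hcob : Tendsto (fun t : ℝ => ((c (-t) : Hyp) : ℂ) - (a : ℂ)) atBot
        (Bornology.cobounded ℂ) := tendsto_norm_atTop_iff_cobounded.mp hnorm2
    have hinv : Tendsto (fun t : ℝ => (((c (-t) : Hyp) : ℂ) - (a : ℂ))⁻¹) atBot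
        (𝓝 0) := tendsto_inv₀_cobounded.comp hcob
    have := hinv.neg
    rw [neg_zero] at this
    simpa [hd] using this
  obtain ⟨lam, hlam, hhoro⟩ := horocycle hdgeo hd0
  -- deduce the imaginary part of `c`
  have him : ∀ s, (c s).im = Real.exp s / lam := by
    intro s
    have h1 := hhoro (-s)
    have h2 : d (-s) = minv a (c s) := by rw [hd]; simp
    rw [h2] at h1
    have hns : Complex.normSq ((c s : ℂ) - (a : ℂ)) ≠ 0 :=
      (Complex.normSq_pos.mpr (sub_real_ne_zero (c s) a)).ne'
    have hl : ‖((minv a (c s) : Hyp) : ℂ) - ((0 : ℝ) : ℂ)‖ ^ 2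
        = (Complex.normSq ((c s : ℂ) - (a : ℂ)))⁻¹ := by
      rw [coe_minv]
      rw [show ((((0:ℝ)) : ℂ)) = (0 : ℂ) by norm_num, sub_zero]
      rw [norm_neg, norm_inv]
      rw [show ‖((c s : ℂ) - (a : ℂ))‖⁻¹ ^ 2 = (‖((c s : ℂ) - (a : ℂ))‖ ^ 2)⁻¹ by ring]
      rw [Complex.sq_norm]
    rw [hl, im_minv] at h1
    have hvs := (c s).im_pos
    have hes := Real.exp_neg s
    have he : Real.exp s * Real.exp (-s) = 1 := by
      rw [← Real.exp_add]; simp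
    field_simp at h1 ⊢
    linear_combination (-(Real.exp s)) * h1 + (-((c s).im * lam)) * he
  -- deduce that the real part is constant
  have hconst : ∀ s, (c s).re = (c 0).re := by
    intro s
    have hcosh := UpperHalfPlane.cosh_dist' (c 0) (c s)
    rw [hc 0 s] at hcosh
    rw [Real.cosh_abs, Real.cosh_eq] at hcosh
    rw [him 0, him s] at hcosh
    rw [Real.exp_zero] at hcosh
    have hsq : ((c 0).re - (c s).re) ^ 2 = 0 := by
      have hexp0 : Real.exp (0 - s) = Real.exp (-s) := by ring_nf
      rw [hexp0] at hcosh
      have he : Real.exp s * Real.exp (-s) = 1 := by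
        rw [← Real.exp_add]; simp
      rw [neg_sub, sub_zero] at hcosh
      field_simp at hcosh
      have h4 : lam ^ 4 * ((c 0).re - (c s).re) ^ 2 = 0 := by
        linear_combination (-lam ^ 2) * hcosh + lam ^ 2 * he
      have hl4 : lam ^ 4 ≠ 0 := by positivity
      exact (mul_eq_zero.mp h4).resolve_left hl4
    have := pow_eq_zero_iff (n := 2) (by norm_num) |>.mp hsq
    linarith [this]
  -- identify the constant with `a`
  have h0a : (c 0).re = a := by
    have : Tendsto (fun s => (c s).re) atBot (𝓝 a) := by
      have := (Complex.continuous_re.tendsto _).comp ha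
      exact this
    have h2 : Tendsto (fun s : ℝ => (c 0).re) atBot (𝓝 ((c 0).re)) := tendsto_const_nhds
    have h3 : Tendsto (fun s : ℝ => (c s).re) atBot (𝓝 ((c 0).re)) := by
      apply h2.congr (fun s => (hconst s).symm)
    exact tendsto_nhds_unique h3 this
  intro t
  rw [hconst t, h0a]

lemma idealGeodesic_vert (a : ℝ) : idealGeodesic ↑a ∞ = {z : Hyp | z.re = a} := by
  apply Set.Subset.antisymm
  · rintro z ⟨c, hc, hj, ⟨t, rfl⟩⟩
    exact re_const_of_joins hc hj t
  · intro z hz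
    exact mem_idealGeodesic_of_re_eq hz


/-! ### Nearest-point projection onto a vertical geodesic -/

lemma norm_sub_real_pos (y : Hyp) (a : ℝ) : 0 < ‖(y : ℂ) - (a : ℂ)‖ :=
  norm_pos_iff.mpr (sub_real_ne_zero y a)

/-- The foot of the perpendicular from `y` to the vertical geodesic over `a`. -/
def foot (a : ℝ) (y : Hyp) : Hyp :=
  UpperHalfPlane.mk ⟨a, ‖(y : ℂ) - (a : ℂ)‖⟩ (norm_sub_real_pos y a)

@[simp] lemma foot_re (a : ℝ) (y : Hyp) : (foot a y).re = a := rfl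

@[simp] lemma foot_im (a : ℝ) (y : Hyp) : (foot a y).im = ‖(y : ℂ) - (a : ℂ)‖ := rfl

lemma cosh_dist_vert {a : ℝ} (y z : Hyp) (hz : z.re = a) :
    Real.cosh (dist y z) = (‖(y : ℂ) - (a : ℂ)‖ ^ 2 + z.im ^ 2) / (2 * y.im * z.im) := by
  rw [UpperHalfPlane.cosh_dist', hz, norm_sub_real_sq]

lemma cosh_dist_foot (a : ℝ) (y : Hyp) :
    Real.cosh (dist y (foot a y)) = ‖(y : ℂ) - (a : ℂ)‖ / y.im := by
  rw [cosh_dist_vert y (foot a y) (foot_re a y), foot_im]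
  have hR := norm_sub_real_pos y a
  have hv := y.im_pos
  rw [div_eq_div_iff (by positivity) hv.ne']
  ring

lemma dist_foot_le {a : ℝ} (y z : Hyp) (hz : z.re = a) :
    dist y (foot a y) ≤ dist y z := by
  have hcosh : Real.cosh (dist y (foot a y)) ≤ Real.cosh (dist y z) := by
    rw [cosh_dist_foot, cosh_dist_vert y z hz]
    have hR := norm_sub_real_pos y a
    have hv := y.im_pos
    have hw := z.im_pos
    rw [div_le_div_iff₀ (by positivity) (by positivity)]
    nlinarith [sq_nonneg (‖(y : ℂ) - (a : ℂ)‖ - z.im)]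
  have := Real.cosh_le_cosh.mp hcosh
  rwa [_root_.abs_of_nonneg dist_nonneg, _root_.abs_of_nonneg dist_nonneg] at this

lemma nearest_proj_eq_foot {a : ℝ} {pr : Hyp → Hyp}
    (hpr : IsNearestProj ↑a ∞ pr) (y : Hyp) : pr y = foot a y := by
  obtain ⟨hmem, hmin⟩ := hpr y
  have hre : (pr y).re = a := by
    rw [idealGeodesic_vert] at hmem
    exact hmem
  have hfoot_mem : foot a y ∈ idealGeodesic (↑a) ∞ :=
    mem_idealGeodesic_of_re_eq (foot_re a y)
  have h1 : dist y (pr y) ≤ dist y (foot a y) := hmin _ hfoot_mem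
  have h2 : dist y (foot a y) ≤ dist y (pr y) := dist_foot_le y (pr y) hre
  have heq : dist y (pr y) = dist y (foot a y) := le_antisymm h1 h2
  have hcosh := congrArg Real.cosh heq
  rw [cosh_dist_foot, cosh_dist_vert y (pr y) hre] at hcosh
  have hR := norm_sub_real_pos y a
  have hv := y.im_pos
  have hw := (pr y).im_pos
  have him : (pr y).im = ‖(y : ℂ) - (a : ℂ)‖ := by
    have hsq : ((pr y).im - ‖((y : ℂ) - (a : ℂ))‖) ^ 2 = 0 := by
      field_simp at hcosh
      nlinarith [hcosh]
    have h5 := pow_eq_zero_iff (n := 2) (by norm_num) |>.mp hsq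
    have h6 : ‖(y : ℂ) - (a : ℂ)‖ = ‖(y : ℂ) - (a : ℂ)‖ := rfl
    rw [h6]
    linarith [h5]
  exact UpperHalfPlane.ext' (by rw [hre, foot_re]) (by rw [him, foot_im])

lemma dist_foot_foot (a : ℝ) (y z : Hyp) :
    dist (foot a y) (foot a z)
      = |Real.log ‖(y : ℂ) - (a : ℂ)‖ - Real.log ‖(z : ℂ) - (a : ℂ)‖| := by
  rw [UpperHalfPlane.dist_of_re_eq (by rw [foot_re, foot_re])]
  rw [foot_im, foot_im, Real.dist_eq]


/-! ### The core limit computation -/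

lemma ratio_abs_tendsto {α : Type*} {l : Filter α} {A B : α → ℝ} {c₁ c₂ : ℝ}
    (hB : Tendsto B l atTop) (hAB : Tendsto (fun x => A x - B x) l (𝓝 0)) :
    Tendsto (fun x => |A x - c₁| / |B x - c₂|) l (𝓝 1) := by
  have hA : Tendsto A l atTop := by
    have := hAB.add_atTop hB
    simpa using this
  have hBc : Tendsto (fun x => B x - c₂) l atTop := by
    have := tendsto_atTop_add_const_right l (-c₂) hB
    apply this.congr (fun x => by ring)
  have hinv : Tendsto (fun x => (B x - c₂)⁻¹) l (𝓝 0) := hBc.inv_tendsto_atTop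
  have hnum : Tendsto (fun x => (A x - B x) + (c₂ - c₁)) l (𝓝 (0 + (c₂ - c₁))) :=
    hAB.add_const _
  have hmul := hnum.mul hinv
  rw [mul_zero] at hmul
  have hform := (tendsto_const_nhds (x := (1:ℝ)) (f := l)).add hmul
  rw [add_zero] at hform
  apply hform.congr'
  filter_upwards [hA.eventually_gt_atTop c₁, hBc.eventually_gt_atTop 0] with x hx1 hx2
  rw [_root_.abs_of_pos (by linarith), _root_.abs_of_pos (by linarith : (0:ℝ) < B x - c₂)]
  have hne : B x - c₂ ≠ 0 := by linarith
  field_simp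
  ring

lemma tendsto_toSphere_self :
    Tendsto (fun y : Hyp => toSphere y) (tendsToBdry ∞) (𝓝 (bdryToSphere ∞)) :=
  tendsto_comap

lemma norm_tendsto_atTop : Tendsto (fun y : Hyp => ‖(y : ℂ)‖) (tendsToBdry ∞) atTop :=
  tendsto_toSphere_infty_iff.mp tendsto_toSphere_self

lemma norm_sub_tendsto_atTop (aa : ℝ) :
    Tendsto (fun y : Hyp => ‖(y : ℂ) - (aa : ℂ)‖) (tendsToBdry ∞) atTop := by
  apply tendsto_atTop_mono (fun y => ?_)
    (tendsto_atTop_add_const_right _ (-‖((aa : ℝ) : ℂ)‖) norm_tendsto_atTop)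
  calc ‖(y : ℂ)‖ + -‖((aa : ℝ) : ℂ)‖ = ‖(y : ℂ)‖ - ‖((aa : ℝ) : ℂ)‖ := by ring
    _ ≤ ‖(y : ℂ) - (aa : ℂ)‖ := norm_sub_norm_le _ _

/-- The main theorem in the special case `β₁ = ∞`. -/
lemma core (a₁ a₂ : ℝ) (p₀ : Hyp) (pr₁ pr₂ : Hyp → Hyp)
    (h₁ : IsNearestProj ↑a₁ ∞ pr₁) (h₂ : IsNearestProj ↑a₂ ∞ pr₂) :
    Tendsto (fun y : Hyp => dist (pr₁ y) (pr₁ p₀) / dist (pr₂ y) (pr₂ p₀))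
      (tendsToBdry ∞) (𝓝 1) := by
  have hB : Tendsto (fun y : Hyp => Real.log ‖(y : ℂ) - (a₂ : ℂ)‖) (tendsToBdry ∞) atTop :=
    Real.tendsto_log_atTop.comp (norm_sub_tendsto_atTop a₂)
  have hAB : Tendsto (fun y : Hyp =>
      Real.log ‖(y : ℂ) - (a₁ : ℂ)‖ - Real.log ‖(y : ℂ) - (a₂ : ℂ)‖) (tendsToBdry ∞)
      (𝓝 0) := by
    have hq : Tendsto (fun y : Hyp => ((y : ℂ) - (a₁ : ℂ)) / ((y : ℂ) - (a₂ : ℂ)))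
        (tendsToBdry ∞) (𝓝 1) := by
      have hden : Tendsto (fun y : Hyp => (((y : ℂ) - (a₂ : ℂ)))⁻¹) (tendsToBdry ∞)
          (𝓝 0) := tendsto_inv₀_cobounded.comp
        (tendsto_norm_atTop_iff_cobounded.mp (norm_sub_tendsto_atTop a₂))
      have h3 := (tendsto_const_nhds (x := (1:ℂ)) (f := tendsToBdry ∞)).add
        ((tendsto_const_nhds (x := ((a₂ : ℂ) - (a₁ : ℂ))) (f := tendsToBdry ∞)).mul hden)
      rw [mul_zero, add_zero] at h3
      apply h3.congr (fun y => ?_)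
      have hy2 : ((y : ℂ) - (a₂ : ℂ)) ≠ 0 := sub_real_ne_zero y a₂
      field_simp
      ring
    have hnorm1 : Tendsto (fun y : Hyp =>
        ‖((y : ℂ) - (a₁ : ℂ)) / ((y : ℂ) - (a₂ : ℂ))‖) (tendsToBdry ∞) (𝓝 1) := by
      have := (continuous_norm.tendsto (1 : ℂ)).comp hq
      simp only [Function.comp_def, norm_one] at this
      exact this
    have hlog := (Real.continuousAt_log one_ne_zero).tendsto.comp hnorm1
    rw [Real.log_one] at hlog
    apply hlog.congr (fun y => ?_)
    simp only [Function.comp_apply, norm_div]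
    rw [Real.log_div (norm_ne_zero_iff.mpr (sub_real_ne_zero y a₁))
      (norm_ne_zero_iff.mpr (sub_real_ne_zero y a₂))]
  have hmain := ratio_abs_tendsto (c₁ := Real.log ‖(p₀ : ℂ) - (a₁ : ℂ)‖)
    (c₂ := Real.log ‖(p₀ : ℂ) - (a₂ : ℂ)‖) hB hAB
  apply hmain.congr (fun y => ?_)
  rw [nearest_proj_eq_foot h₁ y, nearest_proj_eq_foot h₁ p₀,
    nearest_proj_eq_foot h₂ y, nearest_proj_eq_foot h₂ p₀,
    dist_foot_foot, dist_foot_foot]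


/-! ### Transfer under the Möbius map `minv b` -/

/-- Action of `z ↦ -(z-b)⁻¹` on the ideal boundary. -/
def mbdry (b : ℝ) (x : Bdry) : Bdry := x.elim ↑(0 : ℝ) (fun r => ↑(-(r - b)⁻¹))

@[simp] lemma mbdry_infty (b : ℝ) : mbdry b ∞ = ↑(0 : ℝ) := rfl
@[simp] lemma mbdry_coe (b r : ℝ) : mbdry b ↑r = ↑(-(r - b)⁻¹) := rfl

lemma norm_coe_minv (b : ℝ) (z : Hyp) :
    ‖((minv b z : Hyp) : ℂ)‖ = ‖(z : ℂ) - (b : ℂ)‖⁻¹ := by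
  rw [coe_minv, norm_neg, norm_inv]

/-- If `f → ∞` on the sphere then `minv b ∘ f → 0`. -/
lemma minv_tendsto_of_infty {X : Type*} {l : Filter X} {f : X → Hyp} (b : ℝ)
    (h : Tendsto (fun x => ‖(f x : ℂ)‖) l atTop) :
    Tendsto (fun x => ((minv b (f x) : Hyp) : ℂ)) l (𝓝 (((0 : ℝ) : ℂ))) := by
  have hnorm2 : Tendsto (fun x => ‖(f x : ℂ) - (b : ℂ)‖) l atTop := by
    apply tendsto_atTop_mono (fun x => ?_)
      (tendsto_atTop_add_const_right _ (-‖((b : ℝ) : ℂ)‖) h)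
    calc ‖(f x : ℂ)‖ + -‖((b : ℝ) : ℂ)‖ = ‖(f x : ℂ)‖ - ‖((b : ℝ) : ℂ)‖ := by ring
      _ ≤ ‖(f x : ℂ) - (b : ℂ)‖ := norm_sub_norm_le _ _
  have hinv : Tendsto (fun x => ((f x : ℂ) - (b : ℂ))⁻¹) l (𝓝 0) :=
    tendsto_inv₀_cobounded.comp (tendsto_norm_atTop_iff_cobounded.mp hnorm2)
  have := hinv.neg
  rw [neg_zero] at this
  simp only [coe_minv]
  simpa using this

/-- If `f → r ≠ b` in `ℂ` then `minv b ∘ f → -(r-b)⁻¹`. -/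
lemma minv_tendsto_of_coe {X : Type*} {l : Filter X} {f : X → Hyp} {b r : ℝ} (hrb : r ≠ b)
    (h : Tendsto (fun x => (f x : ℂ)) l (𝓝 ((r : ℝ) : ℂ))) :
    Tendsto (fun x => ((minv b (f x) : Hyp) : ℂ)) l (𝓝 (((-(r - b)⁻¹ : ℝ) : ℂ))) := by
  have hsub : Tendsto (fun x => (f x : ℂ) - (b : ℂ)) l (𝓝 ((r : ℂ) - (b : ℂ))) :=
    h.sub_const _
  have hne : ((r : ℂ)) - (b : ℂ) ≠ 0 := by
    rw [sub_ne_zero]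
    exact_mod_cast fun hh => hrb (by exact_mod_cast hh)
  have hinv := (hsub.inv₀ hne).neg
  simp only [coe_minv]
  refine hinv.congr' ?_ |>.mono_right (le_of_eq ?_)
  · exact Eventually.of_forall (fun x => rfl)
  · congr 1
    push_cast
    ring

/-- If `f → b` in `ℂ` then `minv b ∘ f → ∞` on the sphere. -/
lemma minv_tendsto_of_base {X : Type*} {l : Filter X} {f : X → Hyp} (b : ℝ)
    (h : Tendsto (fun x => (f x : ℂ)) l (𝓝 ((b : ℝ) : ℂ))) :
    Tendsto (fun x => ‖((minv b (f x) : Hyp) : ℂ)‖) l atTop := by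
  have hsub : Tendsto (fun x => ‖(f x : ℂ) - (b : ℂ)‖) l (𝓝[>] 0) := by
    rw [tendsto_nhdsWithin_iff]
    constructor
    · have h0 : Tendsto (fun x => (f x : ℂ) - (b : ℂ)) l (𝓝 0) := by
        have := h.sub_const ((b : ℝ) : ℂ)
        rwa [sub_self] at this
      have := (continuous_norm.tendsto (0 : ℂ)).comp h0
      simp only [Function.comp_def, norm_zero] at this
      exact this
    · exact Eventually.of_forall (fun x => norm_sub_real_pos (f x) b)
  have := tendsto_inv_nhdsGT_zero.comp hsub
  apply this.congr (fun x => ?_)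
  rw [Function.comp_apply, norm_coe_minv]

lemma joinsBdry_minv {b : ℝ} {α : Bdry} (hα : α ≠ ↑b) {c : ℝ → Hyp}
    (hj : JoinsBdry c α ↑b) : JoinsBdry (fun t => minv b (c t)) (mbdry b α) ∞ := by
  obtain ⟨hback, hfwd⟩ := hj
  constructor
  · induction α using OnePoint.rec with
    | infty =>
      rw [mbdry_infty, tendsto_toSphere_coe_iff]
      exact minv_tendsto_of_infty b (tendsto_toSphere_infty_iff.mp hback)
    | coe r =>
      have hrb : r ≠ b := fun hh => hα (by rw [hh])
      rw [mbdry_coe, tendsto_toSphere_coe_iff]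
      exact minv_tendsto_of_coe hrb (tendsto_toSphere_coe_iff.mp hback)
  · rw [tendsto_toSphere_infty_iff]
    exact minv_tendsto_of_base b (tendsto_toSphere_coe_iff.mp hfwd)

/-- If `f → 0` in `ℂ` then `minvInv b ∘ f → ∞` on the sphere. -/
lemma minvInv_tendsto_of_zero {X : Type*} {l : Filter X} {f : X → Hyp} (b : ℝ)
    (h : Tendsto (fun x => (f x : ℂ)) l (𝓝 (((0 : ℝ) : ℂ)))) :
    Tendsto (fun x => ‖((minvInv b (f x) : Hyp) : ℂ)‖) l atTop := by
  have hnn : Tendsto (fun x => ‖(f x : ℂ)‖) l (𝓝[>] 0) := by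
    rw [tendsto_nhdsWithin_iff]
    constructor
    · have := (continuous_norm.tendsto (((0:ℝ)) : ℂ)).comp h
      simp only [Function.comp_def, Complex.ofReal_zero, norm_zero] at this
      exact this
    · exact Eventually.of_forall (fun x => norm_pos_iff.mpr (coe_ne_zero (f x)))
  have hinv : Tendsto (fun x => ‖((f x : ℂ))⁻¹‖) l atTop := by
    have := tendsto_inv_nhdsGT_zero.comp hnn
    apply this.congr (fun x => ?_)
    rw [Function.comp_apply, norm_inv]
  apply tendsto_atTop_mono (fun x => ?_)
    (tendsto_atTop_add_const_right _ (-‖((b : ℝ) : ℂ)‖) hinv)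
  rw [coe_minvInv]
  calc ‖((f x : ℂ))⁻¹‖ + -‖((b : ℝ) : ℂ)‖ = ‖((f x : ℂ))⁻¹‖ - ‖((b : ℝ) : ℂ)‖ := by ring
    _ ≤ ‖((f x : ℂ))⁻¹ - (b : ℂ)‖ := norm_sub_norm_le _ _
    _ = ‖(b : ℂ) - ((f x : ℂ))⁻¹‖ := by rw [norm_sub_rev]

/-- If `f → -(r-b)⁻¹ ≠ 0` in `ℂ` then `minvInv b ∘ f → r`. -/
lemma minvInv_tendsto_of_coe {X : Type*} {l : Filter X} {f : X → Hyp} {b r : ℝ} (hrb : r ≠ b)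
    (h : Tendsto (fun x => (f x : ℂ)) l (𝓝 (((-(r - b)⁻¹ : ℝ) : ℂ)))) :
    Tendsto (fun x => ((minvInv b (f x) : Hyp) : ℂ)) l (𝓝 ((r : ℝ) : ℂ)) := by
  have hrbC : ((r : ℂ)) - (b : ℂ) ≠ 0 := by
    rw [sub_ne_zero]
    exact_mod_cast fun hh => hrb (by exact_mod_cast hh)
  have hne : (((-(r - b)⁻¹ : ℝ) : ℂ)) ≠ 0 := by
    push_cast
    simp only [ne_eq, neg_eq_zero, inv_eq_zero]
    exact hrbC
  have hinv := h.inv₀ hne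
  have hconst := (tendsto_const_nhds (x := ((b : ℝ) : ℂ)) (f := l)).sub hinv
  simp only [coe_minvInv]
  refine hconst.mono_right (le_of_eq ?_)
  congr 1
  push_cast
  rw [show (-((r : ℂ) - b)⁻¹)⁻¹ = -((r : ℂ) - b) by
    rw [inv_neg, inv_inv]]
  ring

/-- If `f → ∞` on the sphere then `minvInv b ∘ f → b`. -/
lemma minvInv_tendsto_of_infty {X : Type*} {l : Filter X} {f : X → Hyp} (b : ℝ)
    (h : Tendsto (fun x => ‖(f x : ℂ)‖) l atTop) :
    Tendsto (fun x => ((minvInv b (f x) : Hyp) : ℂ)) l (𝓝 ((b : ℝ) : ℂ)) := by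
  have hinv : Tendsto (fun x => ((f x : ℂ))⁻¹) l (𝓝 0) :=
    tendsto_inv₀_cobounded.comp (tendsto_norm_atTop_iff_cobounded.mp h)
  have := (tendsto_const_nhds (x := ((b : ℝ) : ℂ)) (f := l)).sub hinv
  rw [sub_zero] at this
  simp only [coe_minvInv]
  exact this

lemma joinsBdry_minvInv {b : ℝ} {α : Bdry} (hα : α ≠ ↑b) {c : ℝ → Hyp}
    (hj : JoinsBdry c (mbdry b α) ∞) : JoinsBdry (fun t => minvInv b (c t)) α ↑b := by
  obtain ⟨hback, hfwd⟩ := hj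
  constructor
  · induction α using OnePoint.rec with
    | infty =>
      rw [mbdry_infty] at hback
      rw [tendsto_toSphere_infty_iff]
      exact minvInv_tendsto_of_zero b (tendsto_toSphere_coe_iff.mp hback)
    | coe r =>
      have hrb : r ≠ b := fun hh => hα (by rw [hh])
      rw [mbdry_coe] at hback
      rw [tendsto_toSphere_coe_iff]
      exact minvInv_tendsto_of_coe hrb (tendsto_toSphere_coe_iff.mp hback)
  · rw [tendsto_toSphere_coe_iff]
    exact minvInv_tendsto_of_infty b (tendsto_toSphere_infty_iff.mp hfwd)


/-! ### Correspondence of ideal geodesics and nearest projections -/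

lemma mem_ideal_iff {b : ℝ} {α : Bdry} (hα : α ≠ ↑b) (z : Hyp) :
    z ∈ idealGeodesic α ↑b ↔ minv b z ∈ idealGeodesic (mbdry b α) ∞ := by
  constructor
  · rintro ⟨c, hgeo, hj, t, rfl⟩
    refine ⟨fun t => minv b (c t), ?_, joinsBdry_minv hα hj, ⟨t, rfl⟩⟩
    intro s t'
    simp only [dist_minv]
    exact hgeo s t'
  · rintro ⟨c, hgeo, hj, t, ht⟩
    refine ⟨fun t => minvInv b (c t), ?_, joinsBdry_minvInv hα hj, ⟨t, ?_⟩⟩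
    · intro s t'
      simp only [dist_minvInv]
      exact hgeo s t'
    · show minvInv b (c t) = z
      rw [ht, minvInv_minv]

lemma isNearestProj_minv {b : ℝ} {α : Bdry} (hα : α ≠ ↑b) {pr : Hyp → Hyp}
    (h : IsNearestProj α ↑b pr) :
    IsNearestProj (mbdry b α) ∞ (fun w => minv b (pr (minvInv b w))) := by
  intro y
  obtain ⟨hmem, hmin⟩ := h (minvInv b y)
  constructor
  · exact (mem_ideal_iff hα _).mp hmem
  · intro z hz
    have hz' : minvInv b z ∈ idealGeodesic α ↑b := by
      rw [mem_ideal_iff hα, minv_minvInv]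
      exact hz
    have hle := hmin _ hz'
    calc dist y (minv b (pr (minvInv b y)))
        = dist (minvInv b y) (pr (minvInv b y)) := by
          rw [← dist_minvInv b y (minv b (pr (minvInv b y))), minvInv_minv]
      _ ≤ dist (minvInv b y) (minvInv b z) := hle
      _ = dist y z := dist_minvInv b y z

lemma tendsto_minv_bdry (b : ℝ) :
    Tendsto (minv b) (tendsToBdry ↑b) (tendsToBdry ∞) := by
  show Tendsto (minv b) (tendsToBdry ↑b) (comap toSphere (𝓝 (bdryToSphere ∞)))
  rw [tendsto_comap_iff]
  have hbase : Tendsto (fun y : Hyp => toSphere y) (tendsToBdry ↑b)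
      (𝓝 (bdryToSphere ↑b)) := tendsto_comap
  have h1 : Tendsto (fun y : Hyp => (y : ℂ)) (tendsToBdry ↑b) (𝓝 ((b : ℝ) : ℂ)) :=
    tendsto_toSphere_coe_iff.mp hbase
  have h2 := minv_tendsto_of_base b h1
  exact tendsto_toSphere_infty_iff.mpr h2

end ProjAux


/-- For pairwise distinct ideal points `α₁,α₂,β₁,β₂` and `p₀ ∈ ℍ²`,
`lim_{y→β₁} d(π_{α₁,β₁}(y),π_{α₁,β₁}(p₀)) / d(π_{α₂,β₁}(y),π_{α₂,β₁}(p₀)) = 1`. -/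
theorem projection_distance_ratio_tendsto_one
    (α₁ α₂ β₁ β₂ : Bdry)
    (h₁₂ : α₁ ≠ α₂) (h₁b₁ : α₁ ≠ β₁) (h₁b₂ : α₁ ≠ β₂)
    (h₂b₁ : α₂ ≠ β₁) (h₂b₂ : α₂ ≠ β₂) (hb : β₁ ≠ β₂)
    (p₀ : Hyp)
    (π₁ π₂ : Hyp → Hyp)
    (hπ₁ : IsNearestProj α₁ β₁ π₁) (hπ₂ : IsNearestProj α₂ β₁ π₂) :
    Tendsto (fun y : Hyp => dist (π₁ y) (π₁ p₀) / dist (π₂ y) (π₂ p₀))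
      (tendsToBdry β₁) (𝓝 1) := by
  
  induction β₁ using OnePoint.rec with
  | infty =>
    obtain ⟨a₁, rfl⟩ : ∃ a : ℝ, (↑a : Bdry) = α₁ := OnePoint.ne_infty_iff_exists.mp h₁b₁
    obtain ⟨a₂, rfl⟩ : ∃ a : ℝ, (↑a : Bdry) = α₂ := OnePoint.ne_infty_iff_exists.mp h₂b₁
    exact ProjAux.core a₁ a₂ p₀ π₁ π₂ hπ₁ hπ₂
  | coe b =>
    set pr₁ : Hyp → Hyp := fun w => ProjAux.minv b (π₁ (ProjAux.minvInv b w)) with hpr₁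
    set pr₂ : Hyp → Hyp := fun w => ProjAux.minv b (π₂ (ProjAux.minvInv b w)) with hpr₂
    have h₁' : IsNearestProj (ProjAux.mbdry b α₁) ∞ pr₁ :=
      ProjAux.isNearestProj_minv h₁b₁ hπ₁
    have h₂' : IsNearestProj (ProjAux.mbdry b α₂) ∞ pr₂ :=
      ProjAux.isNearestProj_minv h₂b₁ hπ₂
    obtain ⟨a₁, ha₁⟩ : ∃ a : ℝ, ProjAux.mbdry b α₁ = ↑a := by
      induction α₁ using OnePoint.rec with
      | infty => exact ⟨0, rfl⟩
      | coe r => exact ⟨-(r - b)⁻¹, rfl⟩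
    obtain ⟨a₂, ha₂⟩ : ∃ a : ℝ, ProjAux.mbdry b α₂ = ↑a := by
      induction α₂ using OnePoint.rec with
      | infty => exact ⟨0, rfl⟩
      | coe r => exact ⟨-(r - b)⁻¹, rfl⟩
    rw [ha₁] at h₁'
    rw [ha₂] at h₂'
    have hcore := ProjAux.core a₁ a₂ (ProjAux.minv b p₀) pr₁ pr₂ h₁' h₂'
    have hcomp := hcore.comp (ProjAux.tendsto_minv_bdry b)
    apply hcomp.congr (fun y => ?_)
    have e1 : ∀ w : Hyp, pr₁ (ProjAux.minv b w) = ProjAux.minv b (π₁ w) := fun w => by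
      rw [hpr₁]
      simp only
      rw [ProjAux.minvInv_minv]
    have e2 : ∀ w : Hyp, pr₂ (ProjAux.minv b w) = ProjAux.minv b (π₂ w) := fun w => by
      rw [hpr₂]
      simp only
      rw [ProjAux.minvInv_minv]
    show dist (pr₁ (ProjAux.minv b y)) (pr₁ (ProjAux.minv b p₀)) /
        dist (pr₂ (ProjAux.minv b y)) (pr₂ (ProjAux.minv b p₀))
      = dist (π₁ y) (π₁ p₀) / dist (π₂ y) (π₂ p₀)
    rw [e1, e1, e2, e2, ProjAux.dist_minv, ProjAux.dist_minv]
end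
end

section
/- Let $\hat{\pi}: \hat{X} \to X$ be a surjective local isometry between compact metric spaces, and let $\hat{h}: \hat{X} \to \hat{X}$ and $h: X \to X$ be homeomorphisms satisfying $\hat{\pi} \circ \hat{h} = h \circ \hat{\pi}$. Then the topological entropies coincide: $h_{top}(\hat{h}) = h_{top}(h)$. -/
open Filter Topology Set
open scoped ENNReal NNReal

noncomputable section

variable {X : Type*} [MetricSpace X]

/-- The Bowen dynamical distance `dₙ(x,y) = max_{0 ≤ k ≤ n-1} d(f^k x, f^k y)`. -/
def bowenDist (f : X → X) (n : ℕ) (x y : X) : ℝ :=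
  ((Finset.range n).sup fun k => nndist (f^[k] x) (f^[k] y) : NNReal)

/-- A set is `(n,ε)`-separated if any two distinct points of it are at Bowen
distance `dₙ` at least `ε`. -/
def IsDynSeparated (f : X → X) (n : ℕ) (ε : ℝ) (A : Set X) : Prop :=
  ∀ x ∈ A, ∀ y ∈ A, x ≠ y → ε ≤ bowenDist f n x y

/-- `a_{n,ε}`: the maximal cardinality of an `(n,ε)`-separated set. -/
def maxSepCard (f : X → X) (n : ℕ) (ε : ℝ) : ℕ∞ :=
  ⨆ (A : Finset X) (_ : IsDynSeparated f n ε ↑A), (A.card : ℕ∞)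

/-- Bowen's topological entropy
`h_top(f) = lim_{ε→0} limsup_n (log a_{n,ε})/n`, the limit over `ε → 0` being a
supremum since `ε ↦ limsup` is antitone. -/
def bowenEntropy (f : X → X) : EReal :=
  ⨆ (ε : ℝ) (_ : 0 < ε),
    Filter.limsup
      (fun n : ℕ => ENNReal.log ((maxSepCard f n ε : ℕ∞) : ℝ≥0∞) / (n : EReal))
      Filter.atTop

/-- `π` is a local isometry: every point has a neighbourhood on which `π`
preserves distances. -/
def IsLocalIsometry {Y : Type*} [MetricSpace Y] (π : X → Y) : Prop :=
  ∀ x : X, ∃ U ∈ 𝓝 x, ∀ y ∈ U, ∀ z ∈ U, dist (π y) (π z) = dist y z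

/-! ### Auxiliary lemmas on `bowenDist` -/

lemma bowenDist_nonneg (f : X → X) (n : ℕ) (x y : X) : 0 ≤ bowenDist f n x y :=
  NNReal.coe_nonneg _

lemma bowenDist_self (f : X → X) (n : ℕ) (x : X) : bowenDist f n x x = 0 := by
  have : ((Finset.range n).sup fun k => nndist (f^[k] x) (f^[k] x)) = 0 := by
    simp
  simp [bowenDist, this]

lemma bowenDist_comm (f : X → X) (n : ℕ) (x y : X) :
    bowenDist f n x y = bowenDist f n y x := by
  unfold bowenDist
  congr 1
  exact Finset.sup_congr rfl fun k _ => nndist_comm _ _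

lemma dist_iterate_le_bowenDist (f : X → X) {n k : ℕ} (hk : k < n) (x y : X) :
    dist (f^[k] x) (f^[k] y) ≤ bowenDist f n x y := by
  rw [dist_nndist]
  exact_mod_cast Finset.le_sup (f := fun k => nndist (f^[k] x) (f^[k] y))
    (Finset.mem_range.2 hk)

lemma bowenDist_le {f : X → X} {n : ℕ} {x y : X} {c : ℝ} (hc : 0 ≤ c)
    (h : ∀ k < n, dist (f^[k] x) (f^[k] y) ≤ c) : bowenDist f n x y ≤ c := by
  have : ((Finset.range n).sup fun k => nndist (f^[k] x) (f^[k] y)) ≤ c.toNNReal :=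
    Finset.sup_le fun k hk => by
      have := h k (Finset.mem_range.1 hk)
      rw [dist_nndist] at this
      exact (Real.le_toNNReal_iff_coe_le hc).2 this
  calc bowenDist f n x y ≤ (c.toNNReal : ℝ) := by exact_mod_cast this
    _ = c := Real.coe_toNNReal c hc

lemma bowenDist_triangle (f : X → X) (n : ℕ) (x y z : X) :
    bowenDist f n x z ≤ bowenDist f n x y + bowenDist f n y z := by
  have : ((Finset.range n).sup fun k => nndist (f^[k] x) (f^[k] z)) ≤
      ((Finset.range n).sup fun k => nndist (f^[k] x) (f^[k] y)) +
      ((Finset.range n).sup fun k => nndist (f^[k] y) (f^[k] z)) :=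
    Finset.sup_le fun k hk => le_trans (nndist_triangle _ (f^[k] y) _)
      (add_le_add
        (Finset.le_sup (f := fun k => nndist (f^[k] x) (f^[k] y)) hk)
        (Finset.le_sup (f := fun k => nndist (f^[k] y) (f^[k] z)) hk))
  exact_mod_cast this

/-! ### A uniform radius on which a local isometry preserves distances -/

lemma exists_isometry_radius {Y Z : Type*} [MetricSpace Y] [MetricSpace Z]
    [CompactSpace Y] {π : Y → Z} (hloc : IsLocalIsometry π) :
    ∃ δ > 0, ∀ u v : Y, dist u v < δ → dist (π u) (π v) = dist u v := by
  choose U hU hUiso using hloc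
  have hcover : (univ : Set Y) ⊆ ⋃ x, interior (U x) := fun y _ =>
    mem_iUnion.2 ⟨y, mem_interior_iff_mem_nhds.2 (hU y)⟩
  obtain ⟨δ, hδ, hball⟩ := lebesgue_number_lemma_of_metric isCompact_univ
    (fun _ => isOpen_interior) hcover
  refine ⟨δ, hδ, fun u v huv => ?_⟩
  obtain ⟨x, hx⟩ := hball u (mem_univ u)
  exact hUiso x u (interior_subset (hx (Metric.mem_ball_self hδ)))
    v (interior_subset (hx (by simpa [Metric.mem_ball, dist_comm] using huv)))

/-! ### Cardinality bounds for separated sets in compact spaces -/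

lemma exists_card_bound_of_separated {Y : Type*} [MetricSpace Y] [CompactSpace Y]
    {δ : ℝ} (hδ : 0 < δ) :
    ∃ N : ℕ, ∀ A : Finset Y, (∀ x ∈ A, ∀ y ∈ A, x ≠ y → δ ≤ dist x y) → A.card ≤ N := by
  obtain ⟨t, htf, htcover⟩ := (Metric.totallyBounded_iff.1
    (isCompact_univ (X := Y)).totallyBounded) (δ / 2) (by linarith)
  have hmem : ∀ a : Y, ∃ c ∈ t, a ∈ Metric.ball c (δ / 2) := fun a => by
    simpa using Set.mem_iUnion₂.1 (htcover (mem_univ a))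
  choose c hc hball using hmem
  refine ⟨htf.toFinset.card, fun A hA => ?_⟩
  refine Finset.card_le_card_of_injOn c (fun a _ => htf.mem_toFinset.2 (hc a)) ?_
  intro a ha b hb hab
  by_contra hne
  have h1 := Metric.mem_ball.1 (hball a)
  have h2 := Metric.mem_ball.1 (hball b)
  have : dist a b < δ := by
    calc dist a b ≤ dist a (c a) + dist (c a) b := dist_triangle _ _ _
      _ = dist a (c a) + dist b (c b) := by rw [hab, dist_comm (c b) b]
      _ < δ / 2 + δ / 2 := add_lt_add h1 h2
      _ = δ := by ring
  exact absurd (hA a ha b hb hne) (not_le.2 this)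

lemma bowenDist_succ (f : X → X) (n : ℕ) (x y : X) :
    bowenDist f (n + 1) x y = max (bowenDist f n x y) (dist (f^[n] x) (f^[n] y)) := by
  unfold bowenDist
  rw [Finset.range_add_one, Finset.sup_insert, dist_nndist]
  push_cast
  rw [sup_comm]

lemma exists_bowen_small {Y : Type*} [MetricSpace Y] [CompactSpace Y] {f : Y → Y}
    (hf : Continuous f) (n : ℕ) {ε : ℝ} (hε : 0 < ε) :
    ∃ r > 0, ∀ x y : Y, dist x y < r → bowenDist f n x y < ε := by
  induction n with
  | zero =>
    exact ⟨1, one_pos, fun x y _ => by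
      simpa [bowenDist] using hε⟩
  | succ n ih =>
    obtain ⟨r, hr, hrb⟩ := ih
    have hUC : UniformContinuous f^[n] :=
      CompactSpace.uniformContinuous_of_continuous (hf.iterate n)
    obtain ⟨r', hr', hr'b⟩ := Metric.uniformContinuous_iff.1 hUC ε hε
    refine ⟨min r r', lt_min hr hr', fun x y hxy => ?_⟩
    rw [bowenDist_succ]
    exact max_lt (hrb x y (lt_of_lt_of_le hxy (min_le_left _ _)))
      (hr'b (lt_of_lt_of_le hxy (min_le_right _ _)))

lemma exists_maximal_separated {Y : Type*} [MetricSpace Y] [CompactSpace Y]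
    {f : Y → Y} (hf : Continuous f) (n : ℕ) {ε : ℝ} (hε : 0 < ε) :
    ∃ B : Finset Y, IsDynSeparated f n ε ↑B ∧
      ∀ A : Finset Y, IsDynSeparated f n ε ↑A → A.card ≤ B.card := by
  obtain ⟨r, hr, hrb⟩ := exists_bowen_small hf n hε
  obtain ⟨N, hN⟩ := exists_card_bound_of_separated (Y := Y) hr
  have hbound : ∀ A : Finset Y, IsDynSeparated f n ε ↑A → A.card ≤ N := by
    intro A hA
    refine hN A fun x hx y hy hxy => ?_
    by_contra hlt
    exact absurd (hA x (by exact_mod_cast hx) y (by exact_mod_cast hy) hxy)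
      (not_le.2 (hrb x y (not_le.1 hlt)))
  set S : Set ℕ := {m | ∃ A : Finset Y, IsDynSeparated f n ε ↑A ∧ A.card = m} with hS
  have hSne : S.Nonempty := ⟨0, ∅, by intro x hx; simp at hx, rfl⟩
  have hSbdd : BddAbove S := ⟨N, fun m ⟨A, hA, hAm⟩ => hAm ▸ hbound A hA⟩
  obtain ⟨B, hB, hBcard⟩ := Nat.sSup_mem hSne hSbdd
  exact ⟨B, hB, fun A hA => hBcard ▸ le_csSup hSbdd ⟨A, hA, rfl⟩⟩

lemma separated_insert_of_spanning_fail {Y : Type*} [MetricSpace Y] [DecidableEq Y]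
    {f : Y → Y} {n : ℕ} {η : ℝ} (hη : 0 < η) {B : Finset Y}
    (hB : IsDynSeparated f n η ↑B) {y : Y} (hy : ∀ b ∈ B, η ≤ bowenDist f n y b) :
    IsDynSeparated f n η ↑(insert y B) ∧ y ∉ B := by
  have hyB : y ∉ B := by
    intro hyB
    have := hy y hyB
    rw [bowenDist_self] at this
    linarith
  refine ⟨?_, hyB⟩
  intro a ha c hc hac
  rw [Finset.coe_insert, Set.mem_insert_iff] at ha hc
  rcases ha with rfl | ha
  · rcases hc with rfl | hc
    · exact absurd rfl hac
    · exact hy c hc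
  · rcases hc with rfl | hc
    · rw [bowenDist_comm]; exact hy a ha
    · exact hB a ha c hc hac

lemma exists_spanning_separated {Y : Type*} [MetricSpace Y] [CompactSpace Y]
    {f : Y → Y} (hf : Continuous f) (n : ℕ) {η : ℝ} (hη : 0 < η) :
    ∃ B : Finset Y, IsDynSeparated f n η ↑B ∧
      (∀ y : Y, ∃ b ∈ B, bowenDist f n y b < η) := by
  obtain ⟨B, hBsep, hBmax⟩ := exists_maximal_separated hf n hη
  refine ⟨B, hBsep, fun y => ?_⟩
  classical
  by_contra hcon
  push_neg at hcon
  obtain ⟨hsep', hyB⟩ := separated_insert_of_spanning_fail hη hBsep hcon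
  have := hBmax _ hsep'
  rw [Finset.card_insert_of_notMem hyB] at this
  omega

/-! ### Limsup lemmas over `EReal` -/

lemma limsup_log_div_mono (u v : ℕ → ℝ≥0∞) (huv : ∀ n, u n ≤ v n) :
    Filter.limsup (fun n : ℕ => ENNReal.log (u n) / (n : EReal)) Filter.atTop ≤
      Filter.limsup (fun n : ℕ => ENNReal.log (v n) / (n : EReal)) Filter.atTop := by
  refine Filter.limsup_le_limsup (Filter.Eventually.of_forall fun n => ?_)
  exact EReal.div_le_div_right_of_nonneg (by exact_mod_cast Nat.zero_le n)
    (ENNReal.log_monotone (huv n))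

lemma limsup_log_mul_div_le {C : ℕ} (hC : 1 ≤ C) (v : ℕ → ℝ≥0∞) (hv : ∀ n, 1 ≤ v n) :
    Filter.limsup (fun n : ℕ => ENNReal.log ((C : ℝ≥0∞) * v n) / (n : EReal))
      Filter.atTop ≤
    Filter.limsup (fun n : ℕ => ENNReal.log (v n) / (n : EReal)) Filter.atTop := by
  set L := Filter.limsup (fun n : ℕ => ENNReal.log (v n) / (n : EReal)) Filter.atTop with hL
  rcases eq_top_or_lt_top L with hLtop | hLlt
  · rw [hLtop]; exact le_top
  -- the constant
  set c : EReal := ENNReal.log (C : ℝ≥0∞) with hc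
  have hcnonneg : 0 ≤ c := ENNReal.zero_le_log_iff.2 (by exact_mod_cast hC)
  have hcne : c ≠ ⊤ := by
    have : (C : ℝ≥0∞) < ⊤ := ENNReal.natCast_lt_top C
    have := ENNReal.log_lt_top_iff.2 this
    exact this.ne
  refine le_of_forall_gt_imp_ge_of_dense fun M hM => ?_
  obtain ⟨M₀, hLM₀, hM₀M⟩ := EReal.exists_between_coe_real hM
  obtain ⟨M', hLM', hM'M₀⟩ := EReal.exists_between_coe_real hLM₀
  have hM'M₀R : M' < M₀ := by exact_mod_cast hM'M₀
  -- eventual bound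
  have hev1 : ∀ᶠ n : ℕ in atTop,
      ENNReal.log (v n) / (n : EReal) < (M' : EReal) :=
    Filter.eventually_lt_of_limsup_lt hLM'
  have harch : ∀ᶠ n : ℕ in atTop, c.toReal ≤ (M₀ - M') * n ∧ 1 ≤ n := by
    obtain ⟨n₀, hn₀⟩ := Archimedean.arch c.toReal (y := M₀ - M') (by linarith)
    filter_upwards [Filter.eventually_ge_atTop (max n₀ 1)] with n hn
    refine ⟨le_trans hn₀ ?_, le_trans (le_max_right _ _) hn⟩
    rw [nsmul_eq_mul, mul_comm] at hn₀ ⊢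
    exact mul_le_mul_of_nonneg_left
      (by exact_mod_cast le_trans (le_max_left n₀ 1) hn) (by linarith)
  have hfinal : ∀ᶠ n : ℕ in atTop,
      ENNReal.log ((C : ℝ≥0∞) * v n) / (n : EReal) ≤ (M₀ : EReal) := by
    filter_upwards [hev1, harch] with n hn1 hn23
    obtain ⟨hn2, hn3⟩ := hn23
    have hnpos : (0 : EReal) < (n : EReal) := by exact_mod_cast Nat.lt_of_lt_of_le zero_lt_one hn3
    have hnne : (n : EReal) ≠ ⊤ := EReal.natCast_ne_top n
    rw [ENNReal.log_mul_add]
    rw [EReal.div_le_iff_le_mul hnpos hnne]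
    have hvle : ENNReal.log (v n) ≤ (M' : EReal) * (n : EReal) := by
      have := (EReal.div_le_iff_le_mul hnpos hnne).1 hn1.le
      rwa [mul_comm] at this
    have hcle : c ≤ ((M₀ - M' : ℝ) : EReal) * (n : EReal) := by
      have hcr : c = (c.toReal : EReal) := (EReal.coe_toReal hcne (by
        intro hbot; rw [hbot] at hcnonneg; exact absurd hcnonneg (by simp))).symm
      rw [hcr, ← EReal.coe_coe_eq_natCast, ← EReal.coe_mul, EReal.coe_le_coe_iff]
      exact hn2
    calc c + ENNReal.log (v n)
        ≤ ((M₀ - M' : ℝ) : EReal) * (n : EReal) + (M' : EReal) * (n : EReal) :=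
          add_le_add hcle hvle
      _ = (M₀ : EReal) * (n : EReal) := by
          rw [← EReal.coe_coe_eq_natCast, ← EReal.coe_mul, ← EReal.coe_mul,
            ← EReal.coe_add, ← EReal.coe_mul]
          congr 1
          ring
      _ = (n : EReal) * (M₀ : EReal) := mul_comm _ _
  exact le_trans (Filter.limsup_le_of_le (by isBoundedDefault) hfinal) hM₀M.le

/-! ### Antitonicity of `maxSepCard` in `ε` -/

lemma maxSepCard_anti (f : X → X) (n : ℕ) {ε ε' : ℝ} (h : ε' ≤ ε) :
    maxSepCard f n ε ≤ maxSepCard f n ε' := by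
  refine iSup₂_le fun A hA => ?_
  exact le_iSup₂_of_le A (fun x hx y hy hxy => le_trans h (hA x hx y hy hxy)) le_rfl

lemma card_le_maxSepCard {Y : Type*} [MetricSpace Y] {f : Y → Y} {n : ℕ} {ε : ℝ}
    {A : Finset Y} (hA : IsDynSeparated f n ε ↑A) : (A.card : ℕ∞) ≤ maxSepCard f n ε :=
  le_iSup₂_of_le A hA le_rfl

lemma maxSepCard_of_isEmpty {Y : Type*} [MetricSpace Y] [IsEmpty Y]
    (f : Y → Y) (n : ℕ) (ε : ℝ) : maxSepCard f n ε = 0 := by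
  refine le_antisymm (iSup₂_le fun A _ => ?_) zero_le
  have : A = ∅ := Finset.eq_empty_of_isEmpty A
  simp [this]

lemma one_le_maxSepCard {Y : Type*} [MetricSpace Y] [Nonempty Y]
    (f : Y → Y) (n : ℕ) (ε : ℝ) : 1 ≤ maxSepCard f n ε := by
  obtain ⟨y⟩ := ‹Nonempty Y›
  have hsep : IsDynSeparated f n ε ↑({y} : Finset Y) := by
    intro a ha b hb hab
    simp only [Finset.coe_singleton, Set.mem_singleton_iff] at ha hb
    exact absurd (ha.trans hb.symm) hab
  have := le_iSup₂_of_le ({y} : Finset Y) hsep le_rfl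
    (f := fun (A : Finset Y) (_ : IsDynSeparated f n ε ↑A) => (A.card : ℕ∞))
  simp at this
  exact this

/-- If `π : X̂ → X` is a surjective local isometry between
compact metric spaces and `ĥ, h` are homeomorphisms with `π ∘ ĥ = h ∘ π`, then
`h_top(ĥ) = h_top(h)`. -/
theorem entropy_eq_of_localIsometry_semiconj
    {Xhat X : Type*} [MetricSpace Xhat] [MetricSpace X]
    [CompactSpace Xhat] [CompactSpace X]
    (π : Xhat → X) (hsurj : Function.Surjective π) (hloc : IsLocalIsometry π)
    (hhat : Xhat ≃ₜ Xhat) (h : X ≃ₜ X)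
    (hcomm : π ∘ hhat = h ∘ π) :
    bowenEntropy ⇑hhat = bowenEntropy ⇑h := by
  classical
  rcases isEmpty_or_nonempty Xhat with hE | hNE
  · -- empty case: both spaces are empty and both entropies are given by the same formula
    haveI : IsEmpty X := ⟨fun x => by
      obtain ⟨x', _⟩ := hsurj x
      exact hE.false x'⟩
    have : ∀ (n : ℕ) (ε : ℝ),
        maxSepCard (⇑hhat) n ε = maxSepCard (⇑h) n ε := by
      intro n ε
      rw [maxSepCard_of_isEmpty, maxSepCard_of_isEmpty]
    simp only [bowenEntropy, this]
  · haveI : Nonempty X := ⟨π (Classical.arbitrary Xhat)⟩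
    have hcont_hat : Continuous ⇑hhat := hhat.continuous
    have hcont_h : Continuous ⇑h := h.continuous
    have hsemi : ∀ (k : ℕ) (x : Xhat), π (hhat^[k] x) = h^[k] (π x) := by
      have hsc : Function.Semiconj π ⇑hhat ⇑h := fun x => congrFun hcomm x
      intro k x
      exact (hsc.iterate_right k) x
    obtain ⟨δ, hδ, hiso⟩ := exists_isometry_radius hloc
    obtain ⟨N, hN⟩ := exists_card_bound_of_separated (Y := Xhat) hδ
    apply le_antisymm
    · -- h_top(ĥ) ≤ h_top(h)
      refine iSup₂_le fun ε hε => ?_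
      -- uniform continuity of ĥ
      obtain ⟨r, hr, hruc⟩ := Metric.uniformContinuous_iff.1
        (CompactSpace.uniformContinuous_of_continuous hcont_hat) δ hδ
      set η : ℝ := min (min (ε / 3) (δ / 3)) (r / 3) with hηdef
      have hηpos : 0 < η := lt_min (lt_min (by linarith) (by linarith)) (by linarith)
      have h2ηε : 2 * η < ε := by
        have : η ≤ ε / 3 := le_trans (min_le_left _ _) (min_le_left _ _)
        linarith
      have h2ηδ : 2 * η < δ := by
        have : η ≤ δ / 3 := le_trans (min_le_left _ _) (min_le_right _ _)
        linarith
      have h2ηr : 2 * η < r := by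
        have : η ≤ r / 3 := min_le_right _ _
        linarith
      -- the key cardinality estimate
      have key : ∀ n : ℕ, maxSepCard ⇑hhat n ε ≤ ((max N 1 : ℕ) : ℕ∞) * maxSepCard ⇑h n η := by
        intro n
        classical
        obtain ⟨B, hBsep, hBspan⟩ := exists_spanning_separated hcont_h n hηpos
        choose b hbB hbclose using hBspan
        refine iSup₂_le fun Ahat hAhat => ?_
        -- each fiber of `a ↦ b (π a)` is δ-separated, hence has at most N elements
        have hfiber : ∀ z ∈ Ahat.image (fun a => b (π a)),
            (Ahat.filter fun a => b (π a) = z).card ≤ max N 1 := by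
          intro z _
          refine le_trans (hN _ ?_) (le_max_left _ _)
          intro x hx y hy hxy
          rw [Finset.mem_filter] at hx hy
          obtain ⟨hxAhat, hxz⟩ := hx
          obtain ⟨hyAhat, hyz⟩ := hy
          -- the projected orbits are 2η-close
          have hproj : bowenDist ⇑h n (π x) (π y) < 2 * η := by
            calc bowenDist ⇑h n (π x) (π y)
                ≤ bowenDist ⇑h n (π x) z + bowenDist ⇑h n z (π y) :=
                  bowenDist_triangle _ _ _ _ _
              _ < η + η := by
                  refine add_lt_add ?_ ?_
                  · rw [← hxz]; exact hbclose (π x)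
                  · rw [bowenDist_comm, ← hyz]; exact hbclose (π y)
              _ = 2 * η := by ring
          by_contra hfar
          have hxylt : dist x y < δ := not_le.1 hfar
          -- all iterates stay 2η-close, contradicting ε-separation
          have step : ∀ k, k < n → dist (hhat^[k] x) (hhat^[k] y) ≤ 2 * η := by
            intro k
            induction k with
            | zero =>
              intro hk0
              calc dist (hhat^[0] x) (hhat^[0] y) = dist x y := by simp
                _ = dist (π x) (π y) := (hiso x y hxylt).symm
                _ = dist (h^[0] (π x)) (h^[0] (π y)) := by simp
                _ ≤ bowenDist ⇑h n (π x) (π y) := dist_iterate_le_bowenDist _ hk0 _ _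
                _ ≤ 2 * η := hproj.le
            | succ k ih =>
              intro hk
              have hk' : k < n := Nat.lt_of_succ_lt hk
              have hd : dist (hhat^[k + 1] x) (hhat^[k + 1] y) < δ := by
                rw [Function.iterate_succ_apply', Function.iterate_succ_apply']
                exact hruc (lt_of_le_of_lt (ih hk') h2ηr)
              calc dist (hhat^[k + 1] x) (hhat^[k + 1] y)
                  = dist (π (hhat^[k + 1] x)) (π (hhat^[k + 1] y)) := (hiso _ _ hd).symm
                _ = dist (h^[k + 1] (π x)) (h^[k + 1] (π y)) := by rw [hsemi, hsemi]
                _ ≤ bowenDist ⇑h n (π x) (π y) := dist_iterate_le_bowenDist _ hk _ _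
                _ ≤ 2 * η := hproj.le
          have hbsmall : bowenDist ⇑hhat n x y ≤ 2 * η :=
            bowenDist_le (by linarith) step
          have hbbig : ε ≤ bowenDist ⇑hhat n x y :=
            hAhat x (by exact_mod_cast hxAhat) y (by exact_mod_cast hyAhat) hxy
          linarith
        have hcard : Ahat.card ≤ max N 1 * (Ahat.image fun a => b (π a)).card :=
          Finset.card_le_mul_card_image _ _ hfiber
        have himg : (Ahat.image fun a => b (π a)).card ≤ B.card :=
          Finset.card_le_card (Finset.image_subset_iff.2 fun a _ => hbB (π a))
        calc (Ahat.card : ℕ∞) ≤ ((max N 1 * B.card : ℕ) : ℕ∞) := by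
              exact_mod_cast le_trans hcard (Nat.mul_le_mul_left _ himg)
          _ = ((max N 1 : ℕ) : ℕ∞) * ((B.card : ℕ) : ℕ∞) := by push_cast; rfl
          _ ≤ ((max N 1 : ℕ) : ℕ∞) * maxSepCard ⇑h n η :=
              by gcongr; exact card_le_maxSepCard hBsep
      -- pass to the limsup
      have hlim : Filter.limsup
          (fun n : ℕ => ENNReal.log ((maxSepCard ⇑hhat n ε : ℕ∞) : ℝ≥0∞) / (n : EReal))
          Filter.atTop ≤
          Filter.limsup
          (fun n : ℕ => ENNReal.log ((maxSepCard ⇑h n η : ℕ∞) : ℝ≥0∞) / (n : EReal))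
          Filter.atTop := by
        refine le_trans (limsup_log_div_mono _
          (fun n => ((max N 1 : ℕ) : ℝ≥0∞) * ((maxSepCard ⇑h n η : ℕ∞) : ℝ≥0∞)) ?_) ?_
        · intro n
          calc ((maxSepCard ⇑hhat n ε : ℕ∞) : ℝ≥0∞)
              ≤ (((((max N 1 : ℕ) : ℕ∞)) * maxSepCard ⇑h n η : ℕ∞) : ℝ≥0∞) :=
                ENat.toENNReal_le.2 (key n)
            _ = ((max N 1 : ℕ) : ℝ≥0∞) * ((maxSepCard ⇑h n η : ℕ∞) : ℝ≥0∞) := by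
                simp [ENat.toENNReal_mul]
        · exact limsup_log_mul_div_le (le_max_right N 1) _
            (fun n => by
              have := one_le_maxSepCard (⇑h) n η
              calc (1 : ℝ≥0∞) = ((1 : ℕ∞) : ℝ≥0∞) := by simp
                _ ≤ _ := ENat.toENNReal_le.2 this)
      exact le_trans hlim (le_iSup₂_of_le η hηpos le_rfl)
    · -- h_top(h) ≤ h_top(ĥ)
      refine iSup₂_le fun ε hε => ?_
      set ε' : ℝ := min ε δ with hε'def
      have hε'pos : 0 < ε' := lt_min hε hδ
      have hε'δ : ε' ≤ δ := min_le_right _ _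
      -- maxSepCard for h is dominated by that of ĥ at scale ε'
      have cmp : ∀ n : ℕ, maxSepCard ⇑h n ε' ≤ maxSepCard ⇑hhat n ε' := by
        intro n
        refine iSup₂_le fun A hA => ?_
        choose s hs using hsurj
        have hsinj : Function.Injective s := fun a c hac => by
          rw [← hs a, ← hs c, hac]
        have hsep : IsDynSeparated ⇑hhat n ε' ↑(A.image s) := by
          intro u hu v hv huv
          rw [Finset.coe_image] at hu hv
          obtain ⟨a, ha, rfl⟩ := hu
          obtain ⟨c, hc, rfl⟩ := hv
          have hac : a ≠ c := fun hacc => huv (by rw [hacc])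
          by_contra hlt
          push_neg at hlt
          have hsmall : ∀ k, k < n → dist (h^[k] a) (h^[k] c) ≤ bowenDist ⇑hhat n (s a) (s c) := by
            intro k hk
            have h1 : dist (hhat^[k] (s a)) (hhat^[k] (s c)) < δ :=
              lt_of_le_of_lt (dist_iterate_le_bowenDist _ hk _ _)
                (lt_of_lt_of_le hlt hε'δ)
            calc dist (h^[k] a) (h^[k] c)
                = dist (h^[k] (π (s a))) (h^[k] (π (s c))) := by rw [hs, hs]
              _ = dist (π (hhat^[k] (s a))) (π (hhat^[k] (s c))) := by rw [hsemi, hsemi]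
              _ = dist (hhat^[k] (s a)) (hhat^[k] (s c)) := hiso _ _ h1
              _ ≤ bowenDist ⇑hhat n (s a) (s c) := dist_iterate_le_bowenDist _ hk _ _
          have hble : bowenDist ⇑h n a c ≤ bowenDist ⇑hhat n (s a) (s c) :=
            bowenDist_le (bowenDist_nonneg _ _ _ _) hsmall
          have := hA a ha c hc hac
          linarith
        calc (A.card : ℕ∞) = ((A.image s).card : ℕ∞) := by
              rw [Finset.card_image_of_injective _ hsinj]
          _ ≤ maxSepCard ⇑hhat n ε' := card_le_maxSepCard hsep
      have hanti : ∀ n : ℕ, maxSepCard ⇑h n ε ≤ maxSepCard ⇑h n ε' :=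
        fun n => maxSepCard_anti _ n (min_le_left _ _)
      have hlim : Filter.limsup
          (fun n : ℕ => ENNReal.log ((maxSepCard ⇑h n ε : ℕ∞) : ℝ≥0∞) / (n : EReal))
          Filter.atTop ≤
          Filter.limsup
          (fun n : ℕ => ENNReal.log ((maxSepCard ⇑hhat n ε' : ℕ∞) : ℝ≥0∞) / (n : EReal))
          Filter.atTop :=
        limsup_log_div_mono _ _ fun n =>
          ENat.toENNReal_le.2 (le_trans (hanti n) (cmp n))
      exact le_trans hlim (le_iSup₂_of_le ε' hε'pos le_rfl)
end
end

section
/- Let $f$ be a homeomorphism of a closed orientable hyperbolic surface $S$ homotopic to the identity, with canonical lift $\tilde f : \mathbb{H}^2 \to \mathbb{H}^2$ (the lift extending continuously to the identity on $\partial\mathbb{H}^2$). Then for every $n \ge 1$, the homotopical rotation set satisfies $\rho(f^n) = n\,\rho(f)$, i.e. $(\alpha,\beta,v) \in \rho(f^n)$ if and only if $(\alpha,\beta,v/n) \in \rho(f)$. -/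
open Filter Topology Set OnePoint

noncomputable section

/-- A group `G` acting on `ℍ²` as the deck transformation group of a closed
hyperbolic surface: an isometric, properly discontinuous, free and cocompact
action. -/
structure DeckAction (G : Type*) [Group G] [MulAction G Hyp] : Prop where
  isometric : ∀ g : G, Isometry (fun x : Hyp => g • x)
  properlyDisc : ∀ K : Set Hyp, IsCompact K →
    {g : G | ((fun x : Hyp => g • x) '' K ∩ K).Nonempty}.Finite
  free : ∀ g : G, g ≠ 1 → ∀ x : Hyp, g • x ≠ x
  cocompact : ∃ K : Set Hyp, IsCompact K ∧ ∀ x : Hyp, ∃ g : G, g • x ∈ K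

/-- `F` is the canonical lift to `ℍ²` of a homeomorphism of the closed hyperbolic
surface `ℍ²/G` homotopic to the identity: it commutes with all deck
transformations and extends continuously by the identity to `∂ℍ²`. -/
structure CanonicalLift (G : Type*) [Group G] [MulAction G Hyp]
    (F : Hyp ≃ₜ Hyp) : Prop where
  equivariant : ∀ (g : G) (x : Hyp), F (g • x) = g • F x
  bdryId : ∀ b : Bdry,
    Tendsto (fun y : Hyp => toSphere (F y)) (tendsToBdry b) (𝓝 (bdryToSphere b))

/-- `(α, β, v)` belongs to the homotopical rotation set of `f` (expressed via its
canonical lift `F`): either `v = 0` (all zero-speed triples belong to the rotation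
set), or `v > 0`, `α ≠ β`, and there are points `xₖ ∈ ℍ²` and times `nₖ → ∞` with
`xₖ → α`, `F^{nₖ}(xₖ) → β` in `\overline{ℍ²}`, and
`d(π_{α,β}(xₖ), π_{α,β}(F^{nₖ}(xₖ)))/nₖ → v`. -/
def InRotSet (F : Hyp → Hyp) (α β : Bdry) (v : ℝ) : Prop :=
  v = 0 ∨
    (α ≠ β ∧ 0 < v ∧
      ∃ (x : ℕ → Hyp) (n : ℕ → ℕ) (π : Hyp → Hyp),
        IsNearestProj α β π ∧
        Tendsto n atTop atTop ∧
        Tendsto (fun k => toSphere (x k)) atTop (𝓝 (bdryToSphere α)) ∧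
        Tendsto (fun k => toSphere (F^[n k] (x k))) atTop (𝓝 (bdryToSphere β)) ∧
        Tendsto (fun k => dist (π (x k)) (π (F^[n k] (x k))) / (n k : ℝ))
          atTop (𝓝 v))

open UpperHalfPlane Real

/-- The standard geodesic: the positive imaginary axis, parametrized by arclength. -/
def axc (t : ℝ) : Hyp := UpperHalfPlane.mk ⟨0, Real.exp t⟩ (by simpa using Real.exp_pos t)

@[simp] lemma axc_re (t : ℝ) : (axc t).re = 0 := rfl
@[simp] lemma axc_im (t : ℝ) : (axc t).im = Real.exp t := rfl
@[simp] lemma axc_coe (t : ℝ) : (axc t : ℂ) = ⟨0, Real.exp t⟩ := rfl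

lemma axc_isometry : Isometry axc := UpperHalfPlane.isometry_vertical_line 0

lemma dist_axc (s t : ℝ) : dist (axc s) (axc t) = |s - t| := by
  rw [axc_isometry.dist_eq, Real.dist_eq]

lemma hyp_coe_ne_zero (z : Hyp) : (z : ℂ) ≠ 0 := by
  intro h
  have := z.im_pos
  rw [← UpperHalfPlane.coe_im, h] at this
  simp at this

lemma hyp_abs_pos (z : Hyp) : 0 < ‖(z : ℂ)‖ := norm_pos_iff.mpr (hyp_coe_ne_zero z)

lemma hyp_im_le_abs (z : Hyp) : z.im ≤ ‖(z : ℂ)‖ := by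
  rw [← UpperHalfPlane.coe_im]
  calc (z:ℂ).im ≤ |(z:ℂ).im| := le_abs_self _
  _ ≤ ‖(z : ℂ)‖ := Complex.abs_im_le_norm z

/-- Key 1-Lipschitz estimate: `log ∘ abs` is 1-Lipschitz for the hyperbolic metric. -/
lemma abs_log_abs_sub_le_dist (z w : Hyp) :
    |Real.log (‖(z : ℂ)‖) - Real.log (‖(w : ℂ)‖)| ≤ dist z w := by
  have hA : 0 < ‖(z : ℂ)‖ := hyp_abs_pos z
  have hB : 0 < ‖(w : ℂ)‖ := hyp_abs_pos w
  have key : Real.cosh (Real.log (‖(z : ℂ)‖) - Real.log (‖(w : ℂ)‖))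
      ≤ Real.cosh (dist z w) := by
    have hyz : 0 < z.im := z.im_pos
    have hyw : 0 < w.im := w.im_pos
    have h1 : z.im ≤ ‖(z : ℂ)‖ := hyp_im_le_abs z
    have h2 : w.im ≤ ‖(w : ℂ)‖ := hyp_im_le_abs w
    have h3 : |‖(z : ℂ)‖ - ‖(w : ℂ)‖| ≤ ‖((z:ℂ) - (w:ℂ))‖ := by
      exact abs_norm_sub_norm_le (z:ℂ) (w:ℂ)
    have h5 : ‖((z:ℂ) - (w:ℂ))‖^2 = (z.re - w.re)^2 + (z.im - w.im)^2 := by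
      rw [Complex.sq_norm, Complex.normSq_sub]
      simp [Complex.normSq_apply, Complex.mul_re, UpperHalfPlane.coe_re, UpperHalfPlane.coe_im]
      ring
    have h45 : (‖(z : ℂ)‖ - ‖(w : ℂ)‖)^2 ≤ (z.re - w.re)^2 + (z.im - w.im)^2 := by
      rw [← h5, ← sq_abs (‖(z : ℂ)‖ - ‖(w : ℂ)‖)]
      exact pow_le_pow_left₀ (abs_nonneg _) h3 2
    have hAB : z.im * w.im ≤ ‖(z : ℂ)‖ * ‖(w : ℂ)‖ :=
      mul_le_mul h1 h2 (le_of_lt hyw) (le_of_lt hA)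
    have hint1 : (‖(z : ℂ)‖ - ‖(w : ℂ)‖)^2 * (z.im * w.im)
        ≤ ((z.re - w.re)^2 + (z.im - w.im)^2) * (‖(z : ℂ)‖ * ‖(w : ℂ)‖) :=
      mul_le_mul h45 hAB (by positivity) (by positivity)
    have h6 : ‖(z : ℂ)‖ ^ 2 = z.re^2 + z.im^2 := by
      rw [Complex.sq_norm]
      simp [Complex.normSq_apply, UpperHalfPlane.coe_re, UpperHalfPlane.coe_im]
      ring
    have h7 : ‖(w : ℂ)‖ ^ 2 = w.re^2 + w.im^2 := by
      rw [Complex.sq_norm]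
      simp [Complex.normSq_apply, UpperHalfPlane.coe_re, UpperHalfPlane.coe_im]
      ring
    rw [UpperHalfPlane.cosh_dist', Real.cosh_eq, ← Real.log_div (ne_of_gt hA) (ne_of_gt hB),
      Real.exp_log (div_pos hA hB), ← Real.log_inv, Real.exp_log (by positivity),
      inv_div, div_add_div _ _ (ne_of_gt hB) (ne_of_gt hA), div_div,
      div_le_div_iff₀ (by positivity) (by positivity)]
    nlinarith [hint1, h6, h7]
  have := Real.cosh_le_cosh.mp key
  rwa [abs_of_nonneg dist_nonneg] at this

lemma exp_one_sq_ne_one : Real.exp 1 ^ 2 ≠ 1 := by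
  have h1 : (1:ℝ) < Real.exp 1 := by
    have := Real.exp_lt_exp.mpr (show (0:ℝ) < 1 by norm_num)
    simpa using this
  nlinarith

/-- Rigidity: a point at prescribed distances from `axc 0` and `axc 1` compatible with
lying at parameter `t` on the axis is `axc t`. -/
lemma eq_axc_of_dist (w : Hyp) (t : ℝ)
    (h0 : dist w (axc 0) = |t|) (h1 : dist w (axc 1) = |t - 1|) : w = axc t := by
  have e1 : Real.cosh t = (w.re ^ 2 + w.im ^ 2 + 1) / (2 * w.im) := by
    have := UpperHalfPlane.cosh_dist' w (axc 0)
    rw [h0, Real.cosh_abs] at this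
    simpa [Real.exp_zero] using this
  have e2 : Real.cosh (t - 1) =
      (w.re ^ 2 + w.im ^ 2 + Real.exp 1 ^ 2) / (2 * w.im * Real.exp 1) := by
    have := UpperHalfPlane.cosh_dist' w (axc 1)
    rw [h1, Real.cosh_abs] at this
    simpa [sub_zero] using this
  have hy : 0 < w.im := w.im_pos
  have hE : 0 < Real.exp t := Real.exp_pos t
  have he1 : 0 < Real.exp 1 := Real.exp_pos 1
  -- rewrite cosh via exp
  rw [Real.cosh_eq, Real.exp_neg, eq_div_iff (by positivity)] at e1
  rw [Real.cosh_eq, Real.exp_neg, Real.exp_sub,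
    eq_div_iff (by positivity)] at e2
  have hEne : Real.exp t ≠ 0 := ne_of_gt hE
  have he1ne : Real.exp 1 ≠ 0 := ne_of_gt he1
  field_simp at e1 e2
  have h2e : Real.exp 2 = Real.exp 1 * Real.exp 1 := by
    rw [← Real.exp_add]; norm_num
  -- deduce im w = exp t
  have him : w.im = Real.exp t := by
    have hne : Real.exp 1 ^ 2 - 1 ≠ 0 := by
      have := exp_one_sq_ne_one; intro h; apply this; linarith
    have key : w.im * (Real.exp 1 ^ 2 - 1) * (2 * Real.exp 1)
        = Real.exp t * (Real.exp 1 ^ 2 - 1) * (2 * Real.exp 1) := by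
      linear_combination (2 * Real.exp 1) * (e2 - e1)
    exact mul_right_cancel₀ hne (mul_right_cancel₀ (by positivity) key)
  rw [him] at e1
  have hre : w.re = 0 := by
    have : w.re ^ 2 = 0 := by nlinarith [e1, hE]
    exact pow_eq_zero_iff (n := 2) (by norm_num) |>.mp this
  apply UpperHalfPlane.ext' <;> simp [hre, him]

lemma abs_sq_eq (z : Hyp) : ‖(z : ℂ)‖ ^ 2 = z.re ^ 2 + z.im ^ 2 := by
  rw [Complex.sq_norm]
  simp [Complex.normSq_apply, UpperHalfPlane.coe_re, UpperHalfPlane.coe_im]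
  ring

/-- The nearest point on the axis to `z` is at parameter `log |z|`. -/
lemma proj_axis (z : Hyp) (s : ℝ) (h : ∀ t : ℝ, dist z (axc s) ≤ dist z (axc t)) :
    s = Real.log (‖(z : ℂ)‖) := by
  have hA : 0 < ‖(z : ℂ)‖ := hyp_abs_pos z
  have h0 := h (Real.log (‖(z : ℂ)‖))
  have hc : Real.cosh (dist z (axc s)) ≤ Real.cosh (dist z (axc (Real.log (‖(z : ℂ)‖)))) := by
    rw [Real.cosh_le_cosh, abs_of_nonneg dist_nonneg, abs_of_nonneg dist_nonneg]
    exact h0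
  rw [UpperHalfPlane.cosh_dist', UpperHalfPlane.cosh_dist'] at hc
  simp only [axc_re, axc_im, Real.exp_log hA] at hc
  have hy : 0 < z.im := z.im_pos
  have hE : 0 < Real.exp s := Real.exp_pos s
  rw [div_le_div_iff₀ (by positivity) (by positivity)] at hc
  have h6 := abs_sq_eq z
  have hR : (z.re - 0)^2 + z.im^2 = ‖(z : ℂ)‖ ^ 2 := by rw [h6]; ring
  rw [hR] at hc
  have : (‖(z : ℂ)‖ - Real.exp s)^2 ≤ 0 := by nlinarith [hc, mul_pos hy hA]
  have : ‖(z : ℂ)‖ = Real.exp s := by nlinarith [sq_nonneg (‖(z : ℂ)‖ - Real.exp s)]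
  rw [this, Real.log_exp]

/-! ### SL(2,ℝ) machinery -/

abbrev SL2 := Matrix.SpecialLinearGroup (Fin 2) ℝ

/-- Build an element of `SL(2,ℝ)` from entries. -/
def mkSL (a b c d : ℝ) (h : a * d - b * c = 1) : SL2 :=
  ⟨!![a, b; c, d], by rw [Matrix.det_fin_two_of]; linarith⟩

@[simp] lemma mkSL_00 (a b c d : ℝ) (h) : (mkSL a b c d h) 0 0 = a := rfl
@[simp] lemma mkSL_01 (a b c d : ℝ) (h) : (mkSL a b c d h) 0 1 = b := rfl
@[simp] lemma mkSL_10 (a b c d : ℝ) (h) : (mkSL a b c d h) 1 0 = c := rfl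
@[simp] lemma mkSL_11 (a b c d : ℝ) (h) : (mkSL a b c d h) 1 1 = d := rfl

lemma sl_det (g : SL2) : g 0 0 * g 1 1 - g 0 1 * g 1 0 = 1 := by
  have := g.prop
  rwa [Matrix.det_fin_two] at this

lemma sl_coe_smul (g : SL2) (z : Hyp) :
    ((g • z : Hyp) : ℂ) = ((g 0 0 : ℂ) * z + g 0 1) / ((g 1 0 : ℂ) * z + g 1 1) := by
  rw [UpperHalfPlane.specialLinearGroup_apply]
  simp [UpperHalfPlane.coe_mk]

lemma sl_den_ne (g : SL2) (z : Hyp) : ((g 1 0 : ℂ) * z + g 1 1) ≠ 0 := by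
  intro H
  have him : (((g 1 0 : ℂ) * z + g 1 1)).im = 0 := by rw [H]; rfl
  have hre : (((g 1 0 : ℂ) * z + g 1 1)).re = 0 := by rw [H]; rfl
  simp [Complex.add_im, Complex.mul_im, UpperHalfPlane.coe_im] at him
  rcases him with h | h
  · simp [Complex.add_re, Complex.mul_re, h, UpperHalfPlane.coe_re] at hre
    have := sl_det g
    rw [h, hre] at this
    simp at this
  · exact absurd h (ne_of_gt z.im_pos)

lemma sl_key (g : SL2) (z : Hyp) :
    ((g • z : Hyp) : ℂ) * ((g 1 0 : ℂ) * z + g 1 1) = (g 0 0 : ℂ) * z + g 0 1 := by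
  rw [sl_coe_smul]
  exact div_mul_cancel₀ _ (sl_den_ne g z)

lemma sl_normSq_den_pos (g : SL2) (z : Hyp) :
    0 < (g 1 0 * z.re + g 1 1) ^ 2 + (g 1 0 * z.im) ^ 2 := by
  have h := sl_den_ne g z
  have : Complex.normSq ((g 1 0 : ℂ) * z + g 1 1) ≠ 0 := by
    simpa [Complex.normSq_eq_zero] using h
  have hsq : Complex.normSq ((g 1 0 : ℂ) * z + g 1 1)
      = (g 1 0 * z.re + g 1 1) ^ 2 + (g 1 0 * z.im) ^ 2 := by
    simp [Complex.normSq_apply, Complex.add_re, Complex.add_im, Complex.mul_re, Complex.mul_im,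
      UpperHalfPlane.coe_re, UpperHalfPlane.coe_im]
    ring
  rw [hsq] at this
  rcases lt_or_eq_of_le (by positivity :
    (0:ℝ) ≤ (g 1 0 * z.re + g 1 1) ^ 2 + (g 1 0 * z.im) ^ 2) with h' | h'
  · exact h'
  · exact absurd h'.symm this

lemma sl_re_mul (g : SL2) (z : Hyp) :
    (g • z).re * ((g 1 0 * z.re + g 1 1) ^ 2 + (g 1 0 * z.im) ^ 2)
      = g 0 0 * g 1 0 * (z.re ^ 2 + z.im ^ 2)
        + (g 0 0 * g 1 1 + g 0 1 * g 1 0) * z.re + g 0 1 * g 1 1 := by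
  have key := sl_key g z
  have k1 := congrArg Complex.re key
  have k2 := congrArg Complex.im key
  simp only [Complex.mul_re, Complex.mul_im, Complex.add_re, Complex.add_im,
    Complex.ofReal_re, Complex.ofReal_im, UpperHalfPlane.coe_re, UpperHalfPlane.coe_im] at k1 k2
  linear_combination (g 1 0 * z.re + g 1 1) * k1 + (g 1 0 * z.im) * k2

lemma sl_im_mul (g : SL2) (z : Hyp) :
    (g • z).im * ((g 1 0 * z.re + g 1 1) ^ 2 + (g 1 0 * z.im) ^ 2) = z.im := by
  have key := sl_key g z
  have k1 := congrArg Complex.re key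
  have k2 := congrArg Complex.im key
  simp only [Complex.mul_re, Complex.mul_im, Complex.add_re, Complex.add_im,
    Complex.ofReal_re, Complex.ofReal_im, UpperHalfPlane.coe_re, UpperHalfPlane.coe_im] at k1 k2
  have hdet := sl_det g
  linear_combination (g 1 0 * z.re + g 1 1) * k2 - (g 1 0 * z.im) * k1 + z.im * hdet

lemma on_axis (z : Hyp) (h : z.re = 0) : z = axc (Real.log z.im) := by
  apply UpperHalfPlane.ext'
  · simp [h]
  · simp [Real.exp_log z.im_pos]

lemma sl_re_eq_zero (g : SL2) (z : Hyp)
    (h : g 0 0 * g 1 0 * (z.re ^ 2 + z.im ^ 2)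
      + (g 0 0 * g 1 1 + g 0 1 * g 1 0) * z.re + g 0 1 * g 1 1 = 0) :
    (g • z).re = 0 := by
  have h1 := sl_re_mul g z
  have h2 := sl_normSq_den_pos g z
  rw [h] at h1
  exact (mul_eq_zero.mp h1).resolve_right (ne_of_gt h2)

lemma sl_im_eq (g : SL2) (z : Hyp) :
    (g • z).im = z.im / ((g 1 0 * z.re + g 1 1) ^ 2 + (g 1 0 * z.im) ^ 2) := by
  have h1 := sl_im_mul g z
  have h2 := sl_normSq_den_pos g z
  rw [eq_div_iff (ne_of_gt h2)]
  linarith [h1]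

/-- Any geodesic line of `ℍ²` is an `SL(2,ℝ)`-image of the standard one. -/
lemma exists_sl_param (c : ℝ → Hyp) (hc : IsGeodesicLine c) :
    ∃ g : SL2, ∀ t : ℝ, c t = g • axc t := by
  classical
  set z₀ := c 0 with hz₀
  set z₁ := c 1 with hz₁
  have h01 : dist z₀ z₁ = 1 := by simpa using hc 0 1
  -- Step 1: find N carrying both z₀ and z₁ to the imaginary axis.
  have step1 : ∃ N : SL2, (N • z₀).re = 0 ∧ (N • z₁).re = 0 := by
    by_cases hre : z₀.re = z₁.re
    · refine ⟨mkSL 1 (-z₀.re) 0 1 (by ring), ?_, ?_⟩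
      · apply sl_re_eq_zero; simp
      · apply sl_re_eq_zero; simp [← hre]
    · set m : ℝ := ((z₀.re ^ 2 + z₀.im ^ 2) - (z₁.re ^ 2 + z₁.im ^ 2)) / (2 * (z₀.re - z₁.re))
        with hm
      have hq₀pos : 0 < (z₀.re - m) ^ 2 + z₀.im ^ 2 := by positivity
      set r : ℝ := Real.sqrt ((z₀.re - m) ^ 2 + z₀.im ^ 2) with hr
      have hrpos : 0 < r := Real.sqrt_pos.mpr hq₀pos
      have hr2 : r ^ 2 = (z₀.re - m) ^ 2 + z₀.im ^ 2 := Real.sq_sqrt (le_of_lt hq₀pos)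
      set u : ℝ := m - r with hu
      set v : ℝ := m + r with hv
      have hs2 : (Real.sqrt (2 * r))⁻¹ ^ 2 = (2 * r)⁻¹ := by
        rw [← Real.sqrt_inv]
        exact Real.sq_sqrt (by positivity)
      have hdet : (Real.sqrt (2 * r))⁻¹ * ((Real.sqrt (2 * r))⁻¹ * v)
          - (Real.sqrt (2 * r))⁻¹ * (-u) * (-(Real.sqrt (2 * r))⁻¹) = 1 := by
        have : (Real.sqrt (2 * r))⁻¹ * (Real.sqrt (2 * r))⁻¹ * (v - u) = 1 := by
          have hvu : v - u = 2 * r := by rw [hu, hv]; ring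
          rw [hvu, ← sq, hs2]
          exact inv_mul_cancel₀ (by positivity)
        linear_combination this
      refine ⟨mkSL ((Real.sqrt (2 * r))⁻¹) ((Real.sqrt (2 * r))⁻¹ * (-u))
        (-(Real.sqrt (2 * r))⁻¹) ((Real.sqrt (2 * r))⁻¹ * v) (by linarith [hdet]), ?_, ?_⟩
      · apply sl_re_eq_zero
        simp only [mkSL_00, mkSL_01, mkSL_10, mkSL_11]
        have hcirc : (z₀.re ^ 2 + z₀.im ^ 2) - (u + v) * z₀.re + u * v = 0 := by
          have huv : u * v = m ^ 2 - r ^ 2 := by rw [hu, hv]; ring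
          have huv2 : u + v = 2 * m := by rw [hu, hv]; ring
          rw [huv, huv2, hr2]; ring
        linear_combination (-((Real.sqrt (2 * r))⁻¹ ^ 2)) * hcirc
      · apply sl_re_eq_zero
        simp only [mkSL_00, mkSL_01, mkSL_10, mkSL_11]
        have hd : z₀.re - z₁.re ≠ 0 := sub_ne_zero.mpr (fun h => hre (by
          have := congrArg UpperHalfPlane.re (rfl : z₀ = z₀); exact h))
        have hmprop : m * (2 * (z₀.re - z₁.re))
            = (z₀.re ^ 2 + z₀.im ^ 2) - (z₁.re ^ 2 + z₁.im ^ 2) := by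
          rw [hm]; field_simp
        have hr2' : r ^ 2 = (z₁.re - m) ^ 2 + z₁.im ^ 2 := by
          rw [hr2]; linear_combination (-1 : ℝ) * hmprop
        have hcirc : (z₁.re ^ 2 + z₁.im ^ 2) - (u + v) * z₁.re + u * v = 0 := by
          have huv : u * v = m ^ 2 - r ^ 2 := by rw [hu, hv]; ring
          have huv2 : u + v = 2 * m := by rw [hu, hv]; ring
          rw [huv, huv2, hr2']; ring
        linear_combination (-((Real.sqrt (2 * r))⁻¹ ^ 2)) * hcirc
  obtain ⟨N, hN₀, hN₁⟩ := step1
  set y₀ : ℝ := (N • z₀).im with hy₀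
  have hy₀pos : 0 < y₀ := (N • z₀).im_pos
  have hsqy : Real.sqrt y₀ ≠ 0 := by positivity
  have hdetS : (Real.sqrt y₀)⁻¹ * Real.sqrt y₀ - 0 * 0 = 1 := by
    field_simp
    norm_num
  set S : SL2 := mkSL (Real.sqrt y₀)⁻¹ 0 0 (Real.sqrt y₀) hdetS with hS
  have hSre : ∀ w : Hyp, w.re = 0 → (S • w).re = 0 := by
    intro w hw
    apply sl_re_eq_zero
    simp [hS, hw]
  have hSim : ∀ w : Hyp, (S • w).im = w.im / y₀ := by
    intro w
    rw [sl_im_eq]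
    simp [hS]
    rw [Real.sq_sqrt (le_of_lt hy₀pos)]
  have hw₀ : S • (N • z₀) = axc 0 := by
    have h1 : (S • (N • z₀)).re = 0 := hSre _ hN₀
    have h2 : (S • (N • z₀)).im = 1 := by
      rw [hSim]; field_simp; exact hy₀.symm
    apply UpperHalfPlane.ext'
    · simpa using h1
    · simp [h2, Real.exp_zero]
  have hw₁ : S • (N • z₁) = axc (Real.log ((N • z₁).im / y₀)) := by
    have h1 : (S • (N • z₁)).re = 0 := hSre _ hN₁
    have := on_axis _ h1
    rwa [hSim] at this
  -- distance is preserved, so the parameter is ±1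
  set L : ℝ := Real.log ((N • z₁).im / y₀) with hL
  have hdist : |L| = 1 := by
    have e1 : dist (S • (N • z₀)) (S • (N • z₁)) = dist z₀ z₁ := by
      rw [(isometry_smul Hyp S).dist_eq, (isometry_smul Hyp N).dist_eq]
    rw [hw₀, hw₁, dist_axc, h01] at e1
    simpa using e1
  have hJdet : (0 : ℝ) * 0 - 1 * (-1) = 1 := by norm_num
  set J : SL2 := mkSL 0 1 (-1) 0 hJdet with hJ
  have hJax : ∀ t : ℝ, J • axc t = axc (-t) := by
    intro t
    have h1 : (J • axc t).re = 0 := by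
      apply sl_re_eq_zero
      simp [hJ]
    have h2 : (J • axc t).im = Real.exp (-t) := by
      rw [sl_im_eq]
      simp [hJ, Real.exp_neg]
      rw [pow_two, ← div_div, div_self (Real.exp_ne_zero t), one_div]
    apply UpperHalfPlane.ext'
    · simpa using h1
    · simpa [h2] using rfl
  have key : ∃ M : SL2, M • z₀ = axc 0 ∧ M • z₁ = axc 1 := by
    rcases abs_eq (by norm_num : (0:ℝ) ≤ 1) |>.mp hdist with h | h
    · exact ⟨S * N, by rw [mul_smul, hw₀], by rw [mul_smul, hw₁, h]⟩
    · refine ⟨J * (S * N), ?_, ?_⟩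
      · rw [mul_smul, mul_smul, hw₀]
        simpa using hJax 0
      · rw [mul_smul, mul_smul, hw₁, h]
        simpa using hJax (-1)
  obtain ⟨M, hM₀, hM₁⟩ := key
  refine ⟨M⁻¹, fun t => ?_⟩
  have hgeo : ∀ t : ℝ, M • c t = axc t := by
    intro t
    apply eq_axc_of_dist
    · rw [← hM₀, (isometry_smul Hyp M).dist_eq]
      simpa using hc t 0
    · rw [← hM₁, (isometry_smul Hyp M).dist_eq]
      simpa using hc t 1
  rw [← hgeo t, inv_smul_smul]

/-! ### Ideal endpoints of the standard geodesic under `SL(2,ℝ)` -/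

lemma axc_coe_eq (t : ℝ) : (axc t : ℂ) = (Real.exp t : ℂ) * Complex.I := by
  apply Complex.ext <;>
    simp [Complex.mul_re, Complex.mul_im, Complex.exp_ofReal_re, Complex.exp_ofReal_im]

lemma toSphere_sl (g : SL2) (t : ℝ) :
    toSphere (g • axc t) =
      ((((g 0 0 : ℂ) * ((Real.exp t : ℂ) * Complex.I) + g 0 1) /
        ((g 1 0 : ℂ) * ((Real.exp t : ℂ) * Complex.I) + g 1 1)) : ℂ) := by
  rw [toSphere, sl_coe_smul, axc_coe_eq]

lemma sl_den_ne' (g : SL2) (t : ℝ) :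
    ((g 1 0 : ℂ) * ((Real.exp t : ℂ) * Complex.I) + g 1 1) ≠ 0 := by
  have := sl_den_ne g (axc t)
  rwa [axc_coe_eq] at this

lemma lim_bot_ne (g : SL2) (h : g 1 1 ≠ 0) :
    Tendsto (fun t => toSphere (g • axc t)) atBot
      (𝓝 (((g 0 1 / g 1 1 : ℂ)) : OnePoint ℂ)) := by
  simp only [toSphere_sl]
  apply (OnePoint.continuous_coe.tendsto _).comp
  have hden : Tendsto (fun t : ℝ => (g 1 0 : ℂ) * ((Real.exp t : ℂ) * Complex.I) + g 1 1)
      atBot (𝓝 (g 1 1 : ℂ)) := by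
    have hexp : Tendsto (fun t : ℝ => ((Real.exp t : ℝ) : ℂ)) atBot (𝓝 0) := by
      rw [show ((0:ℂ)) = ((0:ℝ):ℂ) by norm_num]
      exact (Complex.continuous_ofReal.tendsto 0).comp Real.tendsto_exp_atBot
    have := ((hexp.mul_const Complex.I).const_mul (g 1 0 : ℂ)).add_const (g 1 1 : ℂ)
    simpa using this
  have hnum : Tendsto (fun t : ℝ => (g 0 0 : ℂ) * ((Real.exp t : ℂ) * Complex.I) + g 0 1)
      atBot (𝓝 (g 0 1 : ℂ)) := by
    have hexp : Tendsto (fun t : ℝ => ((Real.exp t : ℝ) : ℂ)) atBot (𝓝 0) := by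
      rw [show ((0:ℂ)) = ((0:ℝ):ℂ) by norm_num]
      exact (Complex.continuous_ofReal.tendsto 0).comp Real.tendsto_exp_atBot
    have := ((hexp.mul_const Complex.I).const_mul (g 0 0 : ℂ)).add_const (g 0 1 : ℂ)
    simpa using this
  exact hnum.div hden (by exact_mod_cast h)

lemma coe_tendsto_infty {f : ℝ → ℂ} {l : Filter ℝ}
    (h : Tendsto (fun t => ‖(f t)‖) l atTop) :
    Tendsto (fun t => ((f t : ℂ) : OnePoint ℂ)) l (𝓝 (∞ : OnePoint ℂ)) := by
  have h1 : Tendsto f l (cocompact ℂ) := by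
    apply tendsto_cocompact_of_tendsto_dist_comp_atTop (0 : ℂ)
    simpa [Complex.dist_eq] using h
  have h2 : Tendsto f l (comap ((↑) : ℂ → OnePoint ℂ) (𝓝 ∞)) := by
    rw [OnePoint.comap_coe_nhds_infty, coclosedCompact_eq_cocompact]
    exact h1
  exact tendsto_comap_iff.mp h2

lemma lim_bot_zero (g : SL2) (h : g 1 1 = 0) :
    Tendsto (fun t => toSphere (g • axc t)) atBot (𝓝 (∞ : OnePoint ℂ)) := by
  have hdet := sl_det g
  rw [h] at hdet
  have hb : g 0 1 ≠ 0 := by intro hb; rw [hb] at hdet; simp at hdet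
  have hc : g 1 0 ≠ 0 := by intro hc; rw [hc] at hdet; simp at hdet
  simp only [toSphere_sl]
  apply coe_tendsto_infty
  have heq : ∀ t : ℝ, ‖(((g 0 0 : ℂ) * ((Real.exp t : ℂ) * Complex.I) + g 0 1) /
        ((g 1 0 : ℂ) * ((Real.exp t : ℂ) * Complex.I) + g 1 1))‖
      = ‖((g 0 0 : ℂ) * ((Real.exp t : ℂ) * Complex.I) + g 0 1)‖
        * (|g 1 0| * Real.exp t)⁻¹ := by
    intro t
    rw [norm_div, div_eq_mul_inv]
    congr 2
    rw [h]
    rw [Complex.ofReal_zero, add_zero, norm_mul, norm_mul, Complex.norm_I, Complex.norm_real,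
      Complex.norm_real, Real.norm_eq_abs, Real.norm_eq_abs, abs_of_pos (Real.exp_pos t)]
    ring
  simp only [heq]
  apply Filter.Tendsto.pos_mul_atTop (C := ‖(g 0 1 : ℂ)‖) (by simpa using hb)
  · have hexp : Tendsto (fun t : ℝ => ((Real.exp t : ℝ) : ℂ)) atBot (𝓝 0) := by
      rw [show ((0:ℂ)) = ((0:ℝ):ℂ) by norm_num]
      exact (Complex.continuous_ofReal.tendsto 0).comp Real.tendsto_exp_atBot
    have hnum : Tendsto (fun t : ℝ => (g 0 0 : ℂ) * ((Real.exp t : ℂ) * Complex.I) + g 0 1)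
        atBot (𝓝 (g 0 1 : ℂ)) := by
      have := ((hexp.mul_const Complex.I).const_mul (g 0 0 : ℂ)).add_const (g 0 1 : ℂ)
      simpa using this
    exact (continuous_norm.tendsto _).comp hnum
  · apply Filter.Tendsto.inv_tendsto_nhdsGT_zero
    rw [tendsto_nhdsWithin_iff]
    constructor
    · have := Real.tendsto_exp_atBot.const_mul (|g 1 0|)
      simpa using this
    · filter_upwards with t
      have : 0 < |g 1 0| * Real.exp t := by
        have : 0 < |g 1 0| := abs_pos.mpr hc
        positivity
      exact this

lemma lim_top_ne (g : SL2) (h : g 1 0 ≠ 0) :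
    Tendsto (fun t => toSphere (g • axc t)) atTop
      (𝓝 (((g 0 0 / g 1 0 : ℂ)) : OnePoint ℂ)) := by
  simp only [toSphere_sl]
  apply (OnePoint.continuous_coe.tendsto _).comp
  have heq : ∀ t : ℝ,
      ((g 0 0 : ℂ) * ((Real.exp t : ℂ) * Complex.I) + g 0 1) /
        ((g 1 0 : ℂ) * ((Real.exp t : ℂ) * Complex.I) + g 1 1)
      = ((g 0 0 : ℂ) * Complex.I + g 0 1 * (Real.exp (-t) : ℂ)) /
        ((g 1 0 : ℂ) * Complex.I + g 1 1 * (Real.exp (-t) : ℂ)) := by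
    intro t
    have hES : ((Real.exp t : ℂ)) * ((Real.exp (-t) : ℂ)) = 1 := by
      rw [← Complex.ofReal_mul, ← Real.exp_add]
      simp
    have hd1 : ((g 1 0 : ℂ) * ((Real.exp t : ℂ) * Complex.I) + g 1 1) ≠ 0 := sl_den_ne' g t
    have hd2 : ((g 1 0 : ℂ) * Complex.I + g 1 1 * (Real.exp (-t) : ℂ)) ≠ 0 := by
      intro h0
      apply hd1
      have : ((Real.exp t : ℂ)) * ((g 1 0 : ℂ) * Complex.I + g 1 1 * (Real.exp (-t) : ℂ)) = 0 := by
        rw [h0, mul_zero]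
      rw [mul_add] at this
      calc (g 1 0 : ℂ) * ((Real.exp t : ℂ) * Complex.I) + g 1 1
          = (Real.exp t : ℂ) * ((g 1 0 : ℂ) * Complex.I)
            + (Real.exp t : ℂ) * ((g 1 1 : ℂ) * (Real.exp (-t) : ℂ)) := by
            rw [show (Real.exp t : ℂ) * ((g 1 1 : ℂ) * (Real.exp (-t) : ℂ))
              = (g 1 1 : ℂ) * ((Real.exp t : ℂ) * (Real.exp (-t) : ℂ)) by ring, hES]
            ring
        _ = 0 := this
    rw [div_eq_div_iff hd1 hd2]
    linear_combination ((g 0 0 : ℂ) * (g 1 1 : ℂ) - (g 0 1 : ℂ) * (g 1 0 : ℂ)) * Complex.I * hES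
  simp only [heq]
  have hexp : Tendsto (fun t : ℝ => ((Real.exp (-t) : ℝ) : ℂ)) atTop (𝓝 0) := by
    rw [show ((0:ℂ)) = ((0:ℝ):ℂ) by norm_num]
    exact (Complex.continuous_ofReal.tendsto 0).comp
      (Real.tendsto_exp_atBot.comp tendsto_neg_atTop_atBot)
  have hnum : Tendsto (fun t : ℝ => (g 0 0 : ℂ) * Complex.I + (g 0 1 : ℂ) * ((Real.exp (-t) : ℝ) : ℂ))
      atTop (𝓝 ((g 0 0 : ℂ) * Complex.I)) := by
    have := (hexp.const_mul (g 0 1 : ℂ)).const_add ((g 0 0 : ℂ) * Complex.I)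
    simpa using this
  have hden : Tendsto (fun t : ℝ => (g 1 0 : ℂ) * Complex.I + (g 1 1 : ℂ) * ((Real.exp (-t) : ℝ) : ℂ))
      atTop (𝓝 ((g 1 0 : ℂ) * Complex.I)) := by
    have := (hexp.const_mul (g 1 1 : ℂ)).const_add ((g 1 0 : ℂ) * Complex.I)
    simpa using this
  have hlim := hnum.div hden (by
    simp only [mul_ne_zero_iff]
    exact ⟨by exact_mod_cast h, Complex.I_ne_zero⟩)
  have hval : ((g 0 0 : ℂ) * Complex.I) / ((g 1 0 : ℂ) * Complex.I) = (g 0 0 : ℂ) / (g 1 0 : ℂ) :=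
    mul_div_mul_right _ _ Complex.I_ne_zero
  rw [hval] at hlim
  exact hlim

lemma lim_top_zero (g : SL2) (h : g 1 0 = 0) :
    Tendsto (fun t => toSphere (g • axc t)) atTop (𝓝 (∞ : OnePoint ℂ)) := by
  have hdet := sl_det g
  rw [h] at hdet
  have ha : g 0 0 ≠ 0 := by intro ha; rw [ha] at hdet; simp at hdet
  have hd : g 1 1 ≠ 0 := by intro hd; rw [hd] at hdet; simp at hdet
  simp only [toSphere_sl]
  apply coe_tendsto_infty
  apply tendsto_atTop_mono' _ (_ : ∀ᶠ t in atTop,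
    |g 0 0| * Real.exp t / |g 1 1| ≤ ‖(((g 0 0 : ℂ) * ((Real.exp t : ℂ) * Complex.I) + g 0 1) /
        ((g 1 0 : ℂ) * ((Real.exp t : ℂ) * Complex.I) + g 1 1))‖)
  · apply Tendsto.atTop_div_const (abs_pos.mpr hd)
    exact (tendsto_exp_atTop.const_mul_atTop (abs_pos.mpr ha))
  · filter_upwards with t
    rw [h]
    rw [Complex.ofReal_zero, zero_mul, zero_add, norm_div, Complex.norm_real, Real.norm_eq_abs]
    rw [div_le_div_iff_of_pos_right (abs_pos.mpr hd)]
    calc |g 0 0| * Real.exp t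
        = |((g 0 0 : ℂ) * ((Real.exp t : ℂ) * Complex.I) + g 0 1).im| := by
          simp [Complex.add_im, Complex.mul_im, Complex.exp_ofReal_re, Complex.exp_ofReal_im,
            abs_mul, abs_of_pos (Real.exp_pos t)]
      _ ≤ ‖((g 0 0 : ℂ) * ((Real.exp t : ℂ) * Complex.I) + g 0 1)‖ :=
          Complex.abs_im_le_norm _

lemma sl_mul_entry (g h : SL2) (i j : Fin 2) :
    (g * h) i j = g i 0 * h 0 j + g i 1 * h 1 j := by
  show ((g * h : SL2) : Matrix (Fin 2) (Fin 2) ℝ) i j = _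
  rw [Matrix.SpecialLinearGroup.coe_mul, Matrix.mul_apply, Fin.sum_univ_two]

lemma diag_shift (γ : SL2) (hq : γ 0 1 = 0) (hr : γ 1 0 = 0) (t : ℝ) :
    γ • axc t = axc (t + Real.log (γ 0 0 ^ 2)) := by
  have hdet := sl_det γ
  rw [hq, hr] at hdet
  simp only [mul_zero, zero_mul, sub_zero] at hdet
  have hp : γ 0 0 ≠ 0 := by intro h0; rw [h0] at hdet; simp at hdet
  have hre : (γ • axc t).re = 0 := by
    apply sl_re_eq_zero
    rw [hq, hr]
    simp
  have him : (γ • axc t).im = Real.exp t / γ 1 1 ^ 2 := by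
    rw [sl_im_eq, hr]
    simp
  have hs : γ 1 1 = (γ 0 0)⁻¹ := by
    field_simp
    linarith [hdet]
  apply UpperHalfPlane.ext'
  · simpa using hre
  · rw [him, hs]
    simp only [axc_im]
    rw [Real.exp_add, Real.exp_log (by positivity)]
    field_simp

lemma endpoints_determine (g₁ g₂ : SL2) (α β : Bdry)
    (h1b : Tendsto (fun t => toSphere (g₁ • axc t)) atBot (𝓝 (bdryToSphere α)))
    (h2b : Tendsto (fun t => toSphere (g₂ • axc t)) atBot (𝓝 (bdryToSphere α)))
    (h1t : Tendsto (fun t => toSphere (g₁ • axc t)) atTop (𝓝 (bdryToSphere β)))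
    (h2t : Tendsto (fun t => toSphere (g₂ • axc t)) atTop (𝓝 (bdryToSphere β))) :
    ∀ t : ℝ, ∃ s : ℝ, g₁ • axc t = g₂ • axc s := by
  set γ := g₂⁻¹ * g₁ with hγ
  have hmul : g₁ = g₂ * γ := by rw [hγ, mul_inv_cancel_left]
  have e00 : g₁ 0 0 = g₂ 0 0 * γ 0 0 + g₂ 0 1 * γ 1 0 := by rw [hmul, sl_mul_entry]
  have e01 : g₁ 0 1 = g₂ 0 0 * γ 0 1 + g₂ 0 1 * γ 1 1 := by rw [hmul, sl_mul_entry]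
  have e10 : g₁ 1 0 = g₂ 1 0 * γ 0 0 + g₂ 1 1 * γ 1 0 := by rw [hmul, sl_mul_entry]
  have e11 : g₁ 1 1 = g₂ 1 0 * γ 0 1 + g₂ 1 1 * γ 1 1 := by rw [hmul, sl_mul_entry]
  have hdet2 := sl_det g₂
  -- q = 0 from the α-end
  have hq : γ 0 1 = 0 := by
    by_cases hd1 : g₁ 1 1 = 0
    · by_cases hd2 : g₂ 1 1 = 0
      · -- both infinite
        have hc2 : g₂ 1 0 ≠ 0 := by
          intro h0; rw [hd2, h0] at hdet2; simp at hdet2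
        rw [hd2] at e11
        rw [hd1] at e11
        have : g₂ 1 0 * γ 0 1 = 0 := by linarith [e11]
        exact (mul_eq_zero.mp this).resolve_left hc2
      · exfalso
        have l1 := lim_bot_zero g₁ hd1
        have l2 := lim_bot_ne g₂ hd2
        have u1 := tendsto_nhds_unique h1b l1
        have u2 := tendsto_nhds_unique h2b l2
        rw [u1] at u2
        exact (OnePoint.coe_ne_infty _) u2.symm
    · by_cases hd2 : g₂ 1 1 = 0
      · exfalso
        have l1 := lim_bot_ne g₁ hd1
        have l2 := lim_bot_zero g₂ hd2
        have u1 := tendsto_nhds_unique h1b l1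
        have u2 := tendsto_nhds_unique h2b l2
        rw [u1] at u2
        exact (OnePoint.coe_ne_infty _) u2
      · have l1 := lim_bot_ne g₁ hd1
        have l2 := lim_bot_ne g₂ hd2
        have u1 := tendsto_nhds_unique h1b l1
        have u2 := tendsto_nhds_unique h2b l2
        rw [u1] at u2
        have hcc : ((g₁ 0 1 / g₁ 1 1 : ℂ)) = ((g₂ 0 1 / g₂ 1 1 : ℂ)) :=
          OnePoint.coe_eq_coe.mp u2
        have hdd : (g₁ 0 1 : ℝ) * g₂ 1 1 = g₂ 0 1 * g₁ 1 1 := by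
          rw [div_eq_div_iff (by exact_mod_cast hd1) (by exact_mod_cast hd2)] at hcc
          exact_mod_cast hcc
        rw [e01, e11] at hdd
        have : γ 0 1 * (g₂ 0 0 * g₂ 1 1 - g₂ 0 1 * g₂ 1 0) = 0 := by linarith [hdd]
        rw [hdet2] at this
        simpa using this
  -- r = 0 from the β-end
  have hr : γ 1 0 = 0 := by
    by_cases hc1 : g₁ 1 0 = 0
    · by_cases hc2 : g₂ 1 0 = 0
      · have hd2 : g₂ 1 1 ≠ 0 := by
          intro h0; rw [hc2, h0] at hdet2; simp at hdet2
        rw [hc2] at e10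
        rw [hc1] at e10
        have : g₂ 1 1 * γ 1 0 = 0 := by linarith [e10]
        exact (mul_eq_zero.mp this).resolve_left hd2
      · exfalso
        have l1 := lim_top_zero g₁ hc1
        have l2 := lim_top_ne g₂ hc2
        have u1 := tendsto_nhds_unique h1t l1
        have u2 := tendsto_nhds_unique h2t l2
        rw [u1] at u2
        exact (OnePoint.coe_ne_infty _) u2.symm
    · by_cases hc2 : g₂ 1 0 = 0
      · exfalso
        have l1 := lim_top_ne g₁ hc1
        have l2 := lim_top_zero g₂ hc2
        have u1 := tendsto_nhds_unique h1t l1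
        have u2 := tendsto_nhds_unique h2t l2
        rw [u1] at u2
        exact (OnePoint.coe_ne_infty _) u2
      · have l1 := lim_top_ne g₁ hc1
        have l2 := lim_top_ne g₂ hc2
        have u1 := tendsto_nhds_unique h1t l1
        have u2 := tendsto_nhds_unique h2t l2
        rw [u1] at u2
        have hcc : ((g₁ 0 0 / g₁ 1 0 : ℂ)) = ((g₂ 0 0 / g₂ 1 0 : ℂ)) :=
          OnePoint.coe_eq_coe.mp u2
        have hdd : (g₁ 0 0 : ℝ) * g₂ 1 0 = g₂ 0 0 * g₁ 1 0 := by
          rw [div_eq_div_iff (by exact_mod_cast hc1) (by exact_mod_cast hc2)] at hcc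
          exact_mod_cast hcc
        rw [e00, e10] at hdd
        have : γ 1 0 * (g₂ 0 1 * g₂ 1 0 - g₂ 0 0 * g₂ 1 1) = 0 := by linarith [hdd]
        have h' : γ 1 0 * (-1 : ℝ) = 0 := by
          rw [show (-1 : ℝ) = g₂ 0 1 * g₂ 1 0 - g₂ 0 0 * g₂ 1 1 by linarith [hdet2]]
          exact this
        simpa using h'
  intro t
  refine ⟨t + Real.log (γ 0 0 ^ 2), ?_⟩
  have := diag_shift γ hq hr t
  rw [hmul, mul_smul, this]

/-- The ideal geodesic with given distinct endpoints is an `SL(2,ℝ)`-image of the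
standard geodesic, whenever it carries at least one witnessing geodesic line. -/
lemma ideal_structure (α β : Bdry) (c₀ : ℝ → Hyp)
    (hgeo : IsGeodesicLine c₀) (hjoin : JoinsBdry c₀ α β) :
    ∃ g : SL2, idealGeodesic α β = Set.range (fun t => g • axc t) := by
  obtain ⟨g, hg⟩ := exists_sl_param c₀ hgeo
  refine ⟨g, Set.Subset.antisymm ?_ ?_⟩
  · rintro z ⟨c', hgeo', hjoin', t', rfl⟩
    obtain ⟨g', hg'⟩ := exists_sl_param c' hgeo'
    have h1b : Tendsto (fun t => toSphere (g' • axc t)) atBot (𝓝 (bdryToSphere α)) := by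
      have := hjoin'.1
      simpa only [hg'] using this
    have h1t : Tendsto (fun t => toSphere (g' • axc t)) atTop (𝓝 (bdryToSphere β)) := by
      have := hjoin'.2
      simpa only [hg'] using this
    have h2b : Tendsto (fun t => toSphere (g • axc t)) atBot (𝓝 (bdryToSphere α)) := by
      have := hjoin.1
      simpa only [hg] using this
    have h2t : Tendsto (fun t => toSphere (g • axc t)) atTop (𝓝 (bdryToSphere β)) := by
      have := hjoin.2
      simpa only [hg] using this
    obtain ⟨s, hs⟩ := endpoints_determine g' g α β h1b h2b h1t h2t t'
    rw [hg', hs]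
    exact ⟨s, rfl⟩
  · rintro z ⟨t, rfl⟩
    exact ⟨c₀, hgeo, hjoin, t, hg t⟩

/-- Nearest-point projections onto ideal geodesics are `1`-Lipschitz. -/
lemma nearest_lipschitz (α β : Bdry) (pr : Hyp → Hyp) (hπ : IsNearestProj α β pr) :
    ∀ x y : Hyp, dist (pr x) (pr y) ≤ dist x y := by
  obtain ⟨c₀, hgeo, hjoin, -⟩ := (hπ default).1
  obtain ⟨g, hg⟩ := ideal_structure α β c₀ hgeo hjoin
  have hproj : ∀ x : Hyp, pr x = g • axc (Real.log (‖((g⁻¹ • x : Hyp) : ℂ)‖)) := by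
    intro x
    obtain ⟨sx, hsx⟩ : pr x ∈ Set.range (fun t => g • axc t) := by
      rw [← hg]; exact (hπ x).1
    have hmin : ∀ t : ℝ, dist (g⁻¹ • x : Hyp) (axc sx) ≤ dist (g⁻¹ • x : Hyp) (axc t) := by
      intro t
      have h1 : dist x (pr x) ≤ dist x (g • axc t) := by
        apply (hπ x).2
        rw [hg]
        exact ⟨t, rfl⟩
      have e1 : dist (g⁻¹ • x : Hyp) (axc sx) = dist x (pr x) := by
        rw [← hsx, ← (isometry_smul Hyp g).dist_eq (g⁻¹ • x) (axc sx), smul_inv_smul]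
      have e2 : dist (g⁻¹ • x : Hyp) (axc t) = dist x (g • axc t) := by
        rw [← (isometry_smul Hyp g).dist_eq (g⁻¹ • x) (axc t), smul_inv_smul]
      rw [e1, e2]
      exact h1
    have := proj_axis (g⁻¹ • x) sx hmin
    rw [← hsx, this]
  intro x y
  rw [hproj x, hproj y, (isometry_smul Hyp g).dist_eq, dist_axc]
  calc |Real.log (‖((g⁻¹ • x : Hyp) : ℂ)‖) - Real.log (‖((g⁻¹ • y : Hyp) : ℂ)‖)|
      ≤ dist (g⁻¹ • x : Hyp) (g⁻¹ • y : Hyp) := abs_log_abs_sub_le_dist _ _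
    _ = dist x y := (isometry_smul Hyp g⁻¹).dist_eq x y

/-! ### Dynamics: uniform displacement and boundary behaviour of iterates -/

lemma exists_disp {G : Type*} [Group G] [MulAction G Hyp] (hG : DeckAction G)
    (F : Hyp ≃ₜ Hyp) (hF : CanonicalLift G F) :
    ∃ C : ℝ, 0 ≤ C ∧ ∀ x : Hyp, dist (F x) x ≤ C := by
  obtain ⟨K, hK, hcov⟩ := hG.cocompact
  have hcont : Continuous fun z : Hyp => dist (F z) z := (F.continuous).dist continuous_id
  have hbdd : BddAbove ((fun z : Hyp => dist (F z) z) '' K) :=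
    (hK.image hcont).bddAbove
  obtain ⟨C, hC⟩ := hbdd
  refine ⟨max C 0, le_max_right _ _, fun x => ?_⟩
  obtain ⟨g, hg⟩ := hcov x
  have h1 : dist (F (g • x)) (g • x) ≤ C := hC (Set.mem_image_of_mem _ hg)
  have h2 : dist (F (g • x)) (g • x) = dist (F x) x := by
    rw [hF.equivariant g x]
    exact (hG.isometric g).dist_eq (F x) x
  rw [h2] at h1
  exact le_trans h1 (le_max_left _ _)

lemma iterate_disp (F : Hyp ≃ₜ Hyp) (C : ℝ) (hC : ∀ x : Hyp, dist (F x) x ≤ C) :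
    ∀ (j : ℕ) (x : Hyp), dist x ((⇑F)^[j] x) ≤ j * C := by
  intro j
  induction j with
  | zero => intro x; simp
  | succ j ih =>
    intro x
    calc dist x ((⇑F)^[j+1] x)
        ≤ dist x ((⇑F)^[j] x) + dist ((⇑F)^[j] x) ((⇑F)^[j+1] x) := dist_triangle _ _ _
      _ ≤ j * C + C := by
          apply add_le_add (ih x)
          rw [Function.iterate_succ_apply']
          rw [dist_comm]
          exact hC _
      _ = (j + 1 : ℕ) * C := by push_cast; ring

lemma tendsto_iterate_bdry {G : Type*} [Group G] [MulAction G Hyp]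
    (F : Hyp ≃ₜ Hyp) (hF : CanonicalLift G F) (b : Bdry) :
    ∀ j : ℕ, Tendsto ((⇑F)^[j]) (tendsToBdry b) (tendsToBdry b) := by
  intro j
  induction j with
  | zero => simpa using tendsto_id
  | succ j ih =>
    rw [Function.iterate_succ]
    have h1 : Tendsto (⇑F) (tendsToBdry b) (tendsToBdry b) := by
      rw [tendsToBdry, tendsto_comap_iff]
      exact hF.bdryId b
    exact ih.comp h1

lemma tendsto_mod_iterates {G : Type*} [Group G] [MulAction G Hyp]
    (F : Hyp ≃ₜ Hyp) (hF : CanonicalLift G F) (α : Bdry) (x : ℕ → Hyp) (r : ℕ → ℕ) (n : ℕ)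
    (hr : ∀ k, r k < n)
    (hx : Tendsto (fun k => toSphere (x k)) atTop (𝓝 (bdryToSphere α))) :
    Tendsto (fun k => toSphere ((⇑F)^[r k] (x k))) atTop (𝓝 (bdryToSphere α)) := by
  have hx' : Tendsto x atTop (tendsToBdry α) := by
    rw [tendsToBdry, tendsto_comap_iff]
    exact hx
  have hiter : ∀ j : ℕ, Tendsto (fun k => toSphere ((⇑F)^[j] (x k))) atTop
      (𝓝 (bdryToSphere α)) := by
    intro j
    have h1 : Tendsto (fun k => (⇑F)^[j] (x k)) atTop (tendsToBdry α) :=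
      (tendsto_iterate_bdry F hF α j).comp hx'
    rw [tendsToBdry, tendsto_comap_iff] at h1
    exact h1
  intro s hs
  have hall : ∀ᶠ k in atTop, ∀ j ∈ Finset.range n, toSphere ((⇑F)^[j] (x k)) ∈ s := by
    rw [Filter.eventually_all_finset]
    intro j _
    exact (hiter j) hs
  rw [Filter.mem_map]
  filter_upwards [hall] with k hk
  exact hk (r k) (Finset.mem_range.mpr (hr k))


/-- For the canonical lift `F` of a homeomorphism of a closed
orientable hyperbolic surface homotopic to the identity, `ρ(fⁿ) = n·ρ(f)` for all
`n ≥ 1`: `(α,β,v) ∈ ρ(fⁿ)` iff `(α,β,v/n) ∈ ρ(f)`.  (The canonical lift of `fⁿ`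
is `Fⁿ`.) -/
theorem rotSet_iterate {G : Type*} [Group G] [MulAction G Hyp]
    (hG : DeckAction G) (F : Hyp ≃ₜ Hyp) (hF : CanonicalLift G F)
    (n : ℕ) (hn : 1 ≤ n) (α β : Bdry) (v : ℝ) :
    InRotSet (⇑F)^[n] α β v ↔ InRotSet ⇑F α β (v / n) := by
  have hn0 : 0 < n := hn
  have hnR : (0:ℝ) < n := by exact_mod_cast hn0
  constructor
  · rintro (rfl | ⟨hab, hv, x, m, pr, hpr, hm, hx, hb, hd⟩)
    · left; simp
    · right
      refine ⟨hab, div_pos hv hnR, x, fun k => n * m k, pr, hpr, ?_, hx, ?_, ?_⟩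
      · exact tendsto_atTop_mono (fun k => Nat.le_mul_of_pos_left (m k) hn0) hm
      · have heq : ∀ k, (⇑F)^[n * m k] (x k) = ((⇑F)^[n])^[m k] (x k) := by
          intro k; rw [Function.iterate_mul]
        simpa only [heq] using hb
      · have heq : ∀ k, dist (pr (x k)) (pr ((⇑F)^[n * m k] (x k))) / ((n * m k : ℕ) : ℝ)
            = dist (pr (x k)) (pr (((⇑F)^[n])^[m k] (x k))) / (m k : ℝ) / (n : ℝ) := by
          intro k
          rw [Function.iterate_mul, Nat.cast_mul, div_div, mul_comm ((m k : ℝ)) (n:ℝ)]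
        simpa only [heq] using hd.div_const (n:ℝ)
  · rintro (h0 | ⟨hab, hv, x, m, pr, hpr, hm, hx, hb, hd⟩)
    · left
      rcases div_eq_zero_iff.mp h0 with h | h
      · exact h
      · exact absurd h (ne_of_gt hnR)
    · right
      have hvpos : 0 < v := by
        have h1 := mul_pos hv hnR
        rwa [div_mul_cancel₀ v (ne_of_gt hnR)] at h1
      obtain ⟨C, hC0, hC⟩ := exists_disp hG F hF
      set q : ℕ → ℕ := fun k => m k / n with hqdef
      set r : ℕ → ℕ := fun k => m k % n with hrdef
      set y : ℕ → Hyp := fun k => (⇑F)^[r k] (x k) with hydef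
      have hiter_eq : ∀ k, ((⇑F)^[n])^[q k] (y k) = (⇑F)^[m k] (x k) := by
        intro k
        rw [hydef, ← Function.iterate_mul, ← Function.iterate_add_apply]
        congr 1
        exact Nat.div_add_mod (m k) n
      have hqtop : Tendsto q atTop atTop := by
        rw [tendsto_atTop_atTop] at hm ⊢
        intro b
        obtain ⟨N, hN⟩ := hm (n * b)
        refine ⟨N, fun k hk => ?_⟩
        have h1 := hN k hk
        exact (Nat.le_div_iff_mul_le hn0).mpr (by rw [mul_comm]; exact h1)
      refine ⟨hab, hvpos, y, q, pr, hpr, hqtop, ?_, ?_, ?_⟩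
      · exact tendsto_mod_iterates F hF α x r n (fun k => Nat.mod_lt _ hn0) hx
      · simpa only [hiter_eq] using hb
      · -- the distance limit
        have hlip := nearest_lipschitz α β pr hpr
        have hdist_xy : ∀ k, dist (pr (x k)) (pr (y k)) ≤ (n:ℝ) * C := by
          intro k
          calc dist (pr (x k)) (pr (y k)) ≤ dist (x k) (y k) := hlip _ _
            _ ≤ (r k : ℝ) * C := iterate_disp F C hC (r k) (x k)
            _ ≤ (n:ℝ) * C := by
                apply mul_le_mul_of_nonneg_right _ hC0
                exact_mod_cast (Nat.mod_lt (m k) hn0).le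
        have hqR : Tendsto (fun k => (q k : ℝ)) atTop atTop :=
          tendsto_natCast_atTop_atTop.comp hqtop
        have hq1 : ∀ᶠ k in atTop, 1 ≤ q k := hqtop.eventually_ge_atTop 1
        have hr0 : Tendsto (fun k => (r k : ℝ) / (q k : ℝ)) atTop (𝓝 0) := by
          have hbd : ∀ k, (r k : ℝ) / (q k : ℝ) ≤ (n : ℝ) / (q k : ℝ) := by
            intro k
            rcases Nat.eq_zero_or_pos (q k) with h | h
            · simp [h]
            · have hqpos : (0:ℝ) < q k := by exact_mod_cast h
              gcongr
              exact_mod_cast (Nat.mod_lt (m k) hn0).le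
          exact squeeze_zero (fun k => by positivity) hbd
            (tendsto_const_nhds.div_atTop hqR)
        have hmq : Tendsto (fun k => (m k : ℝ) / (q k : ℝ)) atTop (𝓝 (n : ℝ)) := by
          have hlim : Tendsto (fun k => (n:ℝ) + (r k : ℝ) / (q k : ℝ)) atTop (𝓝 ((n:ℝ) + 0)) :=
            tendsto_const_nhds.add hr0
          rw [add_zero] at hlim
          apply hlim.congr'
          filter_upwards [hq1] with k hk
          have hqne : (q k : ℝ) ≠ 0 := by
            have : (0:ℝ) < q k := by exact_mod_cast hk
            exact ne_of_gt this
          have hmk : (m k : ℝ) = n * q k + r k := by exact_mod_cast (Nat.div_add_mod (m k) n).symm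
          rw [hmk]
          field_simp
        have hE : Tendsto (fun k =>
            (dist (pr (y k)) (pr ((⇑F)^[m k] (x k)))
              - dist (pr (x k)) (pr ((⇑F)^[m k] (x k)))) / (q k : ℝ)) atTop (𝓝 0) := by
          have hbd : ∀ k, ‖(dist (pr (y k)) (pr ((⇑F)^[m k] (x k)))
              - dist (pr (x k)) (pr ((⇑F)^[m k] (x k)))) / (q k : ℝ)‖
              ≤ ((n:ℝ) * C) / (q k : ℝ) := by
            intro k
            rcases Nat.eq_zero_or_pos (q k) with h | h
            · simp [h]
            · have hqpos : (0:ℝ) < q k := by exact_mod_cast h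
              rw [Real.norm_eq_abs, abs_div, abs_of_pos hqpos]
              gcongr
              calc |dist (pr (y k)) (pr ((⇑F)^[m k] (x k)))
                  - dist (pr (x k)) (pr ((⇑F)^[m k] (x k)))|
                  ≤ dist (pr (y k)) (pr (x k)) := abs_dist_sub_le _ _ _
                _ = dist (pr (x k)) (pr (y k)) := dist_comm _ _
                _ ≤ (n:ℝ) * C := hdist_xy k
          exact squeeze_zero_norm hbd (tendsto_const_nhds.div_atTop hqR)
        have hd' : Tendsto (fun k =>
            dist (pr (x k)) (pr ((⇑F)^[m k] (x k))) / (m k : ℝ)) atTop (𝓝 (v / n)) := hd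
        have hMain := (hd'.mul hmq).add hE
        rw [div_mul_cancel₀ v (ne_of_gt hnR), add_zero] at hMain
        apply hMain.congr'
        filter_upwards [hq1] with k hk
        have hqne : (q k : ℝ) ≠ 0 := by
          have : (0:ℝ) < q k := by exact_mod_cast hk
          exact ne_of_gt this
        have hm1 : 1 ≤ m k := by
          have h1 : 1 * 1 ≤ q k * n := Nat.mul_le_mul hk hn
          have h2 : q k * n ≤ m k := Nat.div_mul_le_self (m k) n
          omega
        have hmne : (m k : ℝ) ≠ 0 := by
          have : (0:ℝ) < m k := by exact_mod_cast hm1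
          exact ne_of_gt this
        rw [hiter_eq k]
        field_simp
        ring
end
end
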